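/- arXiv:1304.1263 — 6 statements merged into one kernel-verified Lean document; each statement's English description precedes it below -/
import Mathlib

section
/- Under the cycle transform, the fixed points of σ (on-diagonal values, σ(i)=i) correspond exactly to the singlet blocks of π, i.e., the positions i with π(i) equal to a successive minimum forming a block of size one. -/
/-- The cycle of `σ` containing `c`, written with `c` (its minimum) last. -/
noncomputable def cycleList {n : ℕ} (σ : Equiv.Perm (Fin n)) (c : Fin n) : List (Fin n) :=
  (List.range (Function.minimalPeriod (σ : Fin n → Fin n) c)).map (fun k => (σ ^ (k + 1)) c)

open scoped Classical in
/-- The heads (minima of the cycles) of `σ`, listed in increasing order. -/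
noncomputable def headsList {n : ℕ} (σ : Equiv.Perm (Fin n)) : List (Fin n) :=
  Finset.sort (Finset.univ.filter (fun c => ∀ k : ℕ, c ≤ (σ ^ k) c)) (· ≤ ·)

/-- The one-line word of the cycle transform of `σ`. -/
noncomputable def cycleTransformWord {n : ℕ} (σ : Equiv.Perm (Fin n)) : List (Fin n) :=
  (headsList σ).flatMap (cycleList σ)

/-- The cycle transform of `σ`, viewed as a function on positions. -/
noncomputable def ctFun {n : ℕ} (σ : Equiv.Perm (Fin n)) (i : Fin n) : Fin n :=
  (cycleTransformWord σ).getD i.val i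

/-- Position `i` is a successive-minimum (anchor) position of the cycle transform of `σ`:
its value is smaller than all later values. -/
def IsAnchor {n : ℕ} (σ : Equiv.Perm (Fin n)) (i : Fin n) : Prop :=
  ∀ j : Fin n, i ≤ j → ctFun σ i ≤ ctFun σ j

/-- Position `i` carries a singlet block (a block of size one) of the cycle transform of `σ`. -/
def IsSingletPos {n : ℕ} (σ : Equiv.Perm (Fin n)) (i : Fin n) : Prop :=
  IsAnchor σ i ∧ (i.val = 0 ∨ ∃ j : Fin n, j.val + 1 = i.val ∧ IsAnchor σ j)

namespace CTAux

variable {α : Type*} [LinearOrder α]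

/-- `i` is the last position of one of the blocks of `L`. -/
def IsEnd : List (List α) → ℕ → Prop
  | [], _ => False
  | l :: L, i => (i + 1 = l.length) ∨ (l.length ≤ i ∧ IsEnd L (i - l.length))

/-- Each block ends with its minimum, strictly below everything later. -/
def Good : List (List α) → Prop
  | [] => True
  | l :: L => (∃ t m, l = t ++ [m] ∧ (∀ x ∈ t, m < x) ∧ (∀ l' ∈ L, ∀ x ∈ l', m < x)) ∧ Good L

theorem anchor_iff_isEnd {L : List (List α)} (hG : Good L) (i : ℕ)
    (hi : i < L.flatten.length) :
    (∀ j, (hj : j < L.flatten.length) → i ≤ j → L.flatten[i] ≤ L.flatten[j]) ↔ IsEnd L i := by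
  induction L generalizing i with
  | nil => simp at hi
  | cons l L ih =>
    obtain ⟨⟨t, m, hl, htm, hLm⟩, hGL⟩ := hG
    subst hl
    simp only [List.flatten_cons] at hi ⊢
    have hlt : (t ++ [m]).length = t.length + 1 := by simp
    have hflen : ((t ++ [m]) ++ L.flatten).length = t.length + 1 + L.flatten.length := by simp; omega
    have hml : ∀ h : t.length < ((t ++ [m]) ++ L.flatten).length,
        ((t ++ [m]) ++ L.flatten)[t.length] = m := by
      intro h
      rw [List.getElem_append_left (by omega), List.getElem_append_right (le_refl _)]
      simp
    have hmem : ∀ x ∈ L.flatten, m < x := by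
      intro x hx
      obtain ⟨l', hl', hxl'⟩ := List.mem_flatten.1 hx
      exact hLm l' hl' x hxl'
    have hrw : ∀ j (h : (t ++ [m]).length ≤ j) (hj : j < ((t ++ [m]) ++ L.flatten).length),
        ((t ++ [m]) ++ L.flatten)[j] = L.flatten[j - (t ++ [m]).length]'(by omega) :=
      fun j h hj => List.getElem_append_right h
    simp only [IsEnd]
    by_cases hil : i < (t ++ [m]).length
    · by_cases hend : i + 1 = (t ++ [m]).length
      · constructor
        · intro _; exact Or.inl hend
        · intro _ j hj hij
          have hieq : i = t.length := by omega
          have hival : ((t ++ [m]) ++ L.flatten)[i]'hi = m := by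
            subst hieq; exact hml hi
          by_cases hjl : j < (t ++ [m]).length
          · have : j = i := by omega
            subst this; exact le_refl _
          · rw [hival, hrw j (by omega) hj]
            exact le_of_lt (hmem _ (List.getElem_mem _))
      · have hit : i < t.length := by omega
        have hival : m < ((t ++ [m]) ++ L.flatten)[i]'hi := by
          rw [List.getElem_append_left (by omega) (h' := hi),
            List.getElem_append_left hit]
          exact htm _ (List.getElem_mem _)
        constructor
        · intro ha
          exfalso
          have := ha t.length (by omega) (by omega)
          rw [hml (by omega)] at this
          exact absurd this (not_le_of_gt hival)
        · intro he
          exfalso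
          rcases he with h | ⟨h, _⟩ <;> omega
    · push_neg at hil
      have hi' : i - (t ++ [m]).length < L.flatten.length := by omega
      constructor
      · intro ha
        refine Or.inr ⟨hil, (ih hGL _ hi').1 ?_⟩
        intro j hj hij
        have := ha ((t ++ [m]).length + j) (by omega) (by omega)
        rw [hrw i hil hi, hrw ((t ++ [m]).length + j) (by omega) (by omega)] at this
        simpa using this
      · rintro (h | ⟨-, he⟩)
        · omega
        · intro j hj hij
          have hjl : (t ++ [m]).length ≤ j := le_trans hil hij
          rw [hrw i hil hi, hrw j hjl hj]
          exact (ih hGL _ hi').2 he _ (by omega) (by omega)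

theorem singleton_exists {L : List (List α)} (hG : Good L) {x : α} (hx : [x] ∈ L) :
    ∃ i, ∃ hi : i < L.flatten.length,
      L.flatten[i] = x ∧ IsEnd L i ∧ (i = 0 ∨ IsEnd L (i - 1)) := by
  induction L with
  | nil => simp at hx
  | cons l L ih =>
    obtain ⟨⟨t, m, hl, htm, hLm⟩, hGL⟩ := hG
    subst hl
    have hlt : (t ++ [m]).length = t.length + 1 := by simp
    have hflen : ((t ++ [m]) ++ L.flatten).length = t.length + 1 + L.flatten.length := by simp; omega
    simp only [List.flatten_cons, IsEnd]
    rcases List.mem_cons.1 hx with h | h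
    · have ht0 : t = [] := by
        have := congrArg List.length h
        simp at this
        exact this
      subst ht0
      have hm : m = x := by simpa using h.symm
      refine ⟨0, by simp, ?_, Or.inl (by simp), Or.inl rfl⟩
      simpa using hm
    · obtain ⟨i', hi', hval, hend, hprev⟩ := ih hGL h
      refine ⟨(t ++ [m]).length + i', by omega, ?_, ?_, ?_⟩
      · rw [List.getElem_append_right (by omega)]
        simpa using hval
      · refine Or.inr ⟨by omega, ?_⟩
        simpa using hend
      · rcases hprev with h0 | hp
        · subst h0
          exact Or.inr (Or.inl (by omega))
        · rcases Nat.eq_zero_or_pos i' with h0 | hpos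
          · subst h0
            exact Or.inr (Or.inl (by omega))
          · refine Or.inr (Or.inr ⟨by omega, ?_⟩)
            have : (t ++ [m]).length + i' - 1 - (t ++ [m]).length = i' - 1 := by omega
            rw [this]; exact hp

theorem singleton_of_isEnd {L : List (List α)} (hG : Good L) (i : ℕ)
    (hi : i < L.flatten.length) (hend : IsEnd L i) (hprev : i = 0 ∨ IsEnd L (i - 1)) :
    [L.flatten[i]] ∈ L := by
  induction L generalizing i with
  | nil => simp at hi
  | cons l L ih =>
    obtain ⟨⟨t, m, hl, htm, hLm⟩, hGL⟩ := hG
    subst hl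
    have hlt : (t ++ [m]).length = t.length + 1 := by simp
    have hflen : ((t ++ [m]) ++ L.flatten).length = t.length + 1 + L.flatten.length := by simp; omega
    simp only [List.flatten_cons] at hi ⊢
    rcases hend with h | ⟨h, he⟩
    · -- i is the end of the first block, and must be 0 with t = []
      have hi0 : i = 0 := by
        rcases hprev with h0 | hp
        · exact h0
        · rcases Nat.eq_zero_or_pos i with h0 | hipos
          · exact h0
          · exfalso
            rcases hp with h1 | ⟨h2, _⟩ <;> omega
      subst hi0
      have ht0 : t = [] := by
        have : t.length = 0 := by omega
        exact List.eq_nil_of_length_eq_zero this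
      subst ht0
      simp
    · have hi' : i - (t ++ [m]).length < L.flatten.length := by omega
      have hprev' : i - (t ++ [m]).length = 0 ∨ IsEnd L (i - (t ++ [m]).length - 1) := by
        rcases Nat.eq_zero_or_pos (i - (t ++ [m]).length) with h0 | hpos
        · exact Or.inl h0
        · rcases hprev with h0 | hp
          · omega
          · rcases hp with h1 | ⟨h2, he2⟩
            · omega
            · refine Or.inr ?_
              have : i - 1 - (t ++ [m]).length = i - (t ++ [m]).length - 1 := by omega
              rwa [this] at he2
      have hmemL := ih hGL _ hi' he hprev'
      rw [List.getElem_append_right h]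
      exact List.mem_cons_of_mem _ hmemL


variable {n : ℕ} (σ : Equiv.Perm (Fin n))

theorem iter_eq_pow (k : ℕ) : (⇑σ)^[k] = ⇑(σ ^ k) := rfl

theorem Tpos (c : Fin n) : 0 < Function.minimalPeriod (⇑σ) c := by
  have hper : Function.IsPeriodicPt (⇑σ) (orderOf σ) c := by
    show (⇑σ)^[orderOf σ] c = c
    rw [iter_eq_pow, pow_orderOf_eq_one]; rfl
  exact hper.minimalPeriod_pos (orderOf_pos σ)

theorem pow_mod_T (c : Fin n) (m : ℕ) :
    (σ ^ (m % Function.minimalPeriod (⇑σ) c)) c = (σ ^ m) c :=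
  Function.iterate_mod_minimalPeriod_eq

theorem pow_T (c : Fin n) : (σ ^ Function.minimalPeriod (⇑σ) c) c = c := by
  have := pow_mod_T σ c (Function.minimalPeriod (⇑σ) c)
  rw [Nat.mod_self, pow_zero, Equiv.Perm.one_apply] at this
  exact this.symm

theorem exists_pow_cancel (a : ℕ) : ∃ b : ℕ, σ ^ b * σ ^ a = 1 := by
  refine ⟨a * (orderOf σ - 1), ?_⟩
  rw [← pow_add]
  have h : a * (orderOf σ - 1) + a = orderOf σ * a := by
    have ho := orderOf_pos σ
    obtain ⟨k, hk⟩ := Nat.exists_eq_succ_of_ne_zero ho.ne'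
    rw [hk]
    simp [Nat.succ_sub_one, Nat.mul_succ, Nat.succ_mul]
    ring
  rw [h, pow_mul, pow_orderOf_eq_one, one_pow]

/-- `c` is the minimum of its cycle. -/
def Hd (c : Fin n) : Prop := ∀ k : ℕ, c ≤ (σ ^ k) c

theorem mem_headsList {c : Fin n} : c ∈ headsList σ ↔ Hd σ c := by
  classical
  rw [headsList, Finset.mem_sort, Finset.mem_filter]
  simp [Hd]

theorem headsList_sorted : List.Pairwise (· < ·) (headsList σ) :=
  (Finset.sortedLT_sort _).pairwise

theorem cycleList_length (c : Fin n) :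
    (cycleList σ c).length = Function.minimalPeriod (⇑σ) c := by
  simp [cycleList]

theorem cycleList_concat (c : Fin n) :
    cycleList σ c = ((List.range (Function.minimalPeriod (⇑σ) c - 1)).map
      (fun k => (σ ^ (k + 1)) c)) ++ [c] := by
  have hT := Tpos σ c
  conv_lhs => rw [cycleList,
    show Function.minimalPeriod (⇑σ) c = (Function.minimalPeriod (⇑σ) c - 1) + 1 by omega,
    List.range_succ]
  rw [List.map_append]
  congr 1
  simp only [List.map_cons, List.map_nil]
  congr 1
  rw [show Function.minimalPeriod (⇑σ) c - 1 + 1 = Function.minimalPeriod (⇑σ) c by omega]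
  exact pow_T σ c

theorem mem_cycleList {c x : Fin n} :
    x ∈ cycleList σ c ↔ ∃ k < Function.minimalPeriod (⇑σ) c, (σ ^ (k + 1)) c = x := by
  simp [cycleList, eq_comm]

theorem pow_ne_of_lt_T {c : Fin n} {k : ℕ} (hk : 0 < k)
    (hk2 : k < Function.minimalPeriod (⇑σ) c) : (σ ^ k) c ≠ c := by
  intro h
  have h0 : (⇑σ)^[k] c = (⇑σ)^[0] c := by
    rw [iter_eq_pow]; simpa using h
  have := Function.iterate_injOn_Iio_minimalPeriod (f := ⇑σ) (x := c)
    (Set.mem_Iio.2 hk2) (Set.mem_Iio.2 (Tpos σ c)) h0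
  omega

theorem lt_of_mem_dropLast {c x : Fin n} (hc : Hd σ c)
    (hx : x ∈ (List.range (Function.minimalPeriod (⇑σ) c - 1)).map
      (fun k => (σ ^ (k + 1)) c)) : c < x := by
  obtain ⟨k, hk, rfl⟩ := List.mem_map.1 hx
  rw [List.mem_range] at hk
  have hle : c ≤ (σ ^ (k + 1)) c := hc (k + 1)
  have hne : (σ ^ (k + 1)) c ≠ c := pow_ne_of_lt_T σ (by omega) (by omega)
  exact lt_of_le_of_ne hle (Ne.symm hne)

theorem le_of_mem_cycleList {c x : Fin n} (hc : Hd σ c) (hx : x ∈ cycleList σ c) : c ≤ x := by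
  obtain ⟨k, _, rfl⟩ := (mem_cycleList σ).1 hx
  exact hc (k + 1)

/-- If `x` is in the cycle of `c`, then `c` is a power applied to `x` as well. -/
theorem exists_pow_of_mem {c x : Fin n} (hx : x ∈ cycleList σ c) :
    ∃ m : ℕ, (σ ^ m) x = c := by
  obtain ⟨k, _, rfl⟩ := (mem_cycleList σ).1 hx
  obtain ⟨b, hb⟩ := exists_pow_cancel σ (k + 1)
  exact ⟨b, by rw [← Equiv.Perm.mul_apply, hb, Equiv.Perm.one_apply]⟩

theorem heads_eq_of_mem_both {c c' x : Fin n} (hc : Hd σ c) (hc' : Hd σ c')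
    (hx : x ∈ cycleList σ c) (hx' : x ∈ cycleList σ c') : c = c' := by
  obtain ⟨k, _, rfl⟩ := (mem_cycleList σ).1 hx
  obtain ⟨m, hm⟩ := exists_pow_of_mem σ hx'
  -- c' is a power of c and vice versa
  have h1 : c ≤ c' := by
    have : (σ ^ (m + (k + 1))) c = c' := by
      rw [pow_add, Equiv.Perm.mul_apply, hm]
    rw [← this]; exact hc _
  obtain ⟨m', hm'⟩ := exists_pow_of_mem σ hx
  obtain ⟨k', hk', hxk'⟩ := (mem_cycleList σ).1 hx'
  have h2 : c' ≤ c := by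
    have : (σ ^ (m' + (k' + 1))) c' = c := by
      rw [pow_add, Equiv.Perm.mul_apply, hxk', hm']
    rw [← this]; exact hc' _
  exact le_antisymm h1 h2

theorem good_of_sorted : ∀ (hs : List (Fin n)), List.Pairwise (· < ·) hs →
    (∀ c ∈ hs, Hd σ c) → Good (hs.map (cycleList σ)) := by
  intro hs
  induction hs with
  | nil => intro _ _; trivial
  | cons c hs ih =>
    intro hsort hmem
    rw [List.map_cons]
    refine ⟨⟨_, c, cycleList_concat σ c, ?_, ?_⟩, ih hsort.of_cons (fun d hd => hmem d (List.mem_cons_of_mem _ hd))⟩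
    · exact fun x hx => lt_of_mem_dropLast σ (hmem c List.mem_cons_self) hx
    · intro l' hl' x hx
      obtain ⟨c', hc', rfl⟩ := List.mem_map.1 hl'
      have hcc' : c < c' := (List.pairwise_cons.1 hsort).1 c' hc'
      have : c' ≤ x := le_of_mem_cycleList σ (hmem c' (List.mem_cons_of_mem _ hc')) hx
      exact lt_of_lt_of_le hcc' this

theorem good_blocks : Good ((headsList σ).map (cycleList σ)) :=
  good_of_sorted σ _ (headsList_sorted σ) (fun c hc => (mem_headsList σ).1 hc)


theorem cycleList_nodup (c : Fin n) : (cycleList σ c).Nodup := by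
  rw [cycleList]
  refine List.Nodup.map_on ?_ List.nodup_range
  intro j hj k hk h
  rw [List.mem_range] at hj hk
  rw [pow_succ', pow_succ', Equiv.Perm.mul_apply, Equiv.Perm.mul_apply] at h
  have h2 : (σ ^ j) c = (σ ^ k) c := σ.injective h
  have h3 : (⇑σ)^[j] c = (⇑σ)^[k] c := by rw [iter_eq_pow, iter_eq_pow]; exact h2
  exact Function.iterate_injOn_Iio_minimalPeriod (Set.mem_Iio.2 hj) (Set.mem_Iio.2 hk) h3

theorem word_nodup : (cycleTransformWord σ).Nodup := by
  rw [cycleTransformWord, List.nodup_flatMap]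
  constructor
  · exact fun c _ => cycleList_nodup σ c
  · have hne : List.Pairwise (· ≠ ·) (headsList σ) :=
      (headsList_sorted σ).imp (fun h => ne_of_lt h)
    refine hne.imp_of_mem ?_
    intro c c' hc hc' hcc'
    intro x hx hx'
    exact hcc' (heads_eq_of_mem_both σ ((mem_headsList σ).1 hc) ((mem_headsList σ).1 hc') hx hx')

theorem word_mem (x : Fin n) : x ∈ cycleTransformWord σ := by
  classical
  set S : Finset (Fin n) := Finset.univ.filter (fun y => ∃ k : ℕ, (σ ^ k) x = y) with hS
  have hxS : x ∈ S := by simp [hS]; exact ⟨0, by simp⟩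
  have hSne : S.Nonempty := ⟨x, hxS⟩
  set c : Fin n := S.min' hSne with hc
  have hcS : c ∈ S := S.min'_mem hSne
  obtain ⟨k0, hk0⟩ : ∃ k : ℕ, (σ ^ k) x = c := by simpa [hS] using hcS
  have hHd : Hd σ c := by
    intro m
    have hmS : (σ ^ m) c ∈ S := by
      simp only [hS, Finset.mem_filter, Finset.mem_univ, true_and]
      exact ⟨m + k0, by rw [pow_add, Equiv.Perm.mul_apply, hk0]⟩
    exact S.min'_le _ hmS
  obtain ⟨b, hb⟩ := exists_pow_cancel σ k0
  have hbx : (σ ^ b) c = x := by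
    rw [← hk0, ← Equiv.Perm.mul_apply, hb, Equiv.Perm.one_apply]
  have hmod : (σ ^ (b % Function.minimalPeriod (⇑σ) c)) c = x := by
    rw [pow_mod_T]; exact hbx
  have hT := Tpos σ c
  have hxcyc : x ∈ cycleList σ c := by
    rw [mem_cycleList]
    rcases Nat.eq_zero_or_pos (b % Function.minimalPeriod (⇑σ) c) with h0 | hpos
    · refine ⟨Function.minimalPeriod (⇑σ) c - 1, by omega, ?_⟩
      rw [show Function.minimalPeriod (⇑σ) c - 1 + 1 = Function.minimalPeriod (⇑σ) c by omega,
        pow_T]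
      rw [h0, pow_zero, Equiv.Perm.one_apply] at hmod
      exact hmod
    · have hlt : b % Function.minimalPeriod (⇑σ) c < Function.minimalPeriod (⇑σ) c :=
        Nat.mod_lt _ hT
      refine ⟨b % Function.minimalPeriod (⇑σ) c - 1, by omega, ?_⟩
      rw [show b % Function.minimalPeriod (⇑σ) c - 1 + 1 = b % Function.minimalPeriod (⇑σ) c
        by omega]
      exact hmod
  exact List.mem_flatMap.2 ⟨c, (mem_headsList σ).2 hHd, hxcyc⟩

theorem word_length : (cycleTransformWord σ).length = n := by
  classical
  have h1 : (cycleTransformWord σ).toFinset = Finset.univ := by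
    ext y; simp [word_mem σ y]
  have h2 := List.toFinset_card_of_nodup (word_nodup σ)
  rw [h1] at h2
  simpa using h2.symm


theorem word_eq_flatten :
    cycleTransformWord σ = ((headsList σ).map (cycleList σ)).flatten := rfl

theorem flatten_length : (((headsList σ).map (cycleList σ)).flatten).length = n := by
  rw [← word_eq_flatten, word_length]

theorem ctFun_eq (i : Fin n) :
    ctFun σ i = (((headsList σ).map (cycleList σ)).flatten)[i.val]'
      (by rw [flatten_length]; exact i.2) := by
  rw [ctFun, List.getD_eq_getElem _ _ (by rw [word_length]; exact i.2)]
  rfl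

theorem anchor_iff (i : Fin n) :
    IsAnchor σ i ↔ IsEnd ((headsList σ).map (cycleList σ)) i.val := by
  have hi : i.val < (((headsList σ).map (cycleList σ)).flatten).length := by
    rw [flatten_length]; exact i.2
  rw [← anchor_iff_isEnd (good_blocks σ) i.val hi]
  constructor
  · intro ha j hj hij
    have hjn : j < n := by rw [← flatten_length σ]; exact hj
    have := ha ⟨j, hjn⟩ hij
    rwa [ctFun_eq, ctFun_eq] at this
  · intro he j hij
    rw [ctFun_eq, ctFun_eq]
    exact he j.val (by rw [flatten_length]; exact j.2) hij

theorem cycleList_T_one {c : Fin n} (h : Function.minimalPeriod (⇑σ) c = 1) :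
    cycleList σ c = [σ c] := by
  rw [cycleList, h]
  norm_num [List.range_succ]

theorem fixed_iff_singleton_mem (x : Fin n) :
    σ x = x ↔ [x] ∈ (headsList σ).map (cycleList σ) := by
  constructor
  · intro hfix
    have hT1 : Function.minimalPeriod (⇑σ) x = 1 := by
      have hper : Function.IsPeriodicPt (⇑σ) 1 x := by
        show (⇑σ)^[1] x = x; simpa using hfix
      have hle := hper.minimalPeriod_le Nat.one_pos
      have := Tpos σ x
      omega
    have hcyc : cycleList σ x = [x] := by
      rw [cycleList_T_one σ hT1, hfix]
    have hHd : Hd σ x := by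
      intro k
      have : (⇑σ)^[k] x = x := Function.IsFixedPt.iterate hfix k
      rw [iter_eq_pow] at this
      exact le_of_eq this.symm
    exact List.mem_map.2 ⟨x, (mem_headsList σ).2 hHd, hcyc⟩
  · intro hmem
    obtain ⟨c, hc, hcyc⟩ := List.mem_map.1 hmem
    have hT1 : Function.minimalPeriod (⇑σ) c = 1 := by
      have := cycleList_length σ c
      rw [hcyc] at this
      simpa using this.symm
    have hfc : σ c = c := by
      have := pow_T σ c
      rwa [hT1, pow_one] at this
    have hcx : c = x := by
      rw [cycleList_T_one σ hT1, hfc] at hcyc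
      exact (List.cons_eq_cons.1 hcyc).1
    rwa [hcx] at hfc

theorem main (x : Fin n) :
    σ x = x ↔ ∃ i : Fin n, ctFun σ i = x ∧ IsSingletPos σ i := by
  constructor
  · intro hfix
    obtain ⟨i', hi', hval, hend, hprev⟩ :=
      singleton_exists (good_blocks σ) ((fixed_iff_singleton_mem σ x).1 hfix)
    have hin : i' < n := by rw [← flatten_length σ]; exact hi'
    refine ⟨⟨i', hin⟩, ?_, ?_, ?_⟩
    · rw [ctFun_eq]; exact hval
    · exact (anchor_iff σ _).2 hend
    · rcases Nat.eq_zero_or_pos i' with h0 | hpos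
      · exact Or.inl h0
      · rcases hprev with h0 | hp
        · omega
        · refine Or.inr ⟨⟨i' - 1, by omega⟩, by simp; omega, ?_⟩
          exact (anchor_iff σ _).2 hp
  · rintro ⟨i, hval, hanch, hprev⟩
    have hend : IsEnd ((headsList σ).map (cycleList σ)) i.val := (anchor_iff σ i).1 hanch
    have hprev' : i.val = 0 ∨ IsEnd ((headsList σ).map (cycleList σ)) (i.val - 1) := by
      rcases hprev with h0 | ⟨j, hj1, haj⟩
      · exact Or.inl h0
      · refine Or.inr ?_
        have := (anchor_iff σ j).1 haj
        rwa [show j.val = i.val - 1 by omega] at this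
    have hi : i.val < (((headsList σ).map (cycleList σ)).flatten).length := by
      rw [flatten_length]; exact i.2
    have hmem := singleton_of_isEnd (good_blocks σ) i.val hi hend hprev'
    rw [show (((headsList σ).map (cycleList σ)).flatten)[i.val]'hi = x by
      rw [← ctFun_eq]; exact hval] at hmem
    exact (fixed_iff_singleton_mem σ x).2 hmem


end CTAux

/-- The fixed points of `σ` are exactly the values sitting at singlet blocks of its
cycle transform. -/
theorem fixedPoints_eq_singletBlocks (n : ℕ) (σ : Equiv.Perm (Fin n)) (x : Fin n) :
    σ x = x ↔ ∃ i : Fin n, ctFun σ i = x ∧ IsSingletPos σ i :=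
  CTAux.main σ x
end

section
/- Under the cycle transform, the set of over-diagonal values of σ (values σ(i) with σ(i)>i) equals the set of non-singlet ascent values of its cycle transform π, and the set of under-diagonal values of σ equals the set of descent values of π. Here π is extended with π(0)=0, an ascent value is π(i) with π(i-1)<π(i) and a descent value is π(i) with π(i-1)>π(i). -/
/-- `i` is an ascent position of the cycle transform `π` of `σ` (with the convention
`π(0) = 0`, so the first position is an ascent). -/
def IsAscentPos {n : ℕ} (σ : Equiv.Perm (Fin n)) (i : Fin n) : Prop :=
  i.val = 0 ∨ ∃ j : Fin n, j.val + 1 = i.val ∧ ctFun σ j < ctFun σ i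

/-- `i` is a descent position of the cycle transform `π` of `σ`. -/
def IsDescentPos {n : ℕ} (σ : Equiv.Perm (Fin n)) (i : Fin n) : Prop :=
  ∃ j : Fin n, j.val + 1 = i.val ∧ ctFun σ i < ctFun σ j

namespace CTProof

variable {n : ℕ}

theorem mp_pos (σ : Equiv.Perm (Fin n)) (c : Fin n) : 0 < Function.minimalPeriod (⇑σ) c := by
  apply Function.IsPeriodicPt.minimalPeriod_pos (orderOf_pos σ)
  show (⇑σ)^[orderOf σ] c = c
  rw [← Equiv.Perm.coe_pow, pow_orderOf_eq_one]
  rfl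

theorem pow_mp (σ : Equiv.Perm (Fin n)) (c : Fin n) :
    (σ ^ Function.minimalPeriod (⇑σ) c) c = c :=
  Function.iterate_minimalPeriod

theorem pow_mod (σ : Equiv.Perm (Fin n)) (c : Fin n) (j : ℕ) :
    (σ ^ j) c = (σ ^ (j % Function.minimalPeriod (⇑σ) c)) c :=
  (Function.iterate_mod_minimalPeriod_eq).symm

theorem pow_ne (σ : Equiv.Perm (Fin n)) (c : Fin n) {j : ℕ} (h0 : 0 < j)
    (h : j < Function.minimalPeriod (⇑σ) c) : (σ ^ j) c ≠ c :=
  Function.not_isPeriodicPt_of_pos_of_lt_minimalPeriod (by omega) h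

theorem pow_inj (σ : Equiv.Perm (Fin n)) (c : Fin n) {a b : ℕ} (hab : a ≤ b)
    (hd : b - a < Function.minimalPeriod (⇑σ) c) (h : (σ ^ a) c = (σ ^ b) c) : a = b := by
  have key : (σ ^ (b - a)) c = c := by
    apply (σ ^ a).injective
    rw [← Equiv.Perm.mul_apply, ← pow_add]
    rw [show a + (b - a) = b by omega]
    exact h.symm
  by_contra hne
  exact pow_ne σ c (by omega) hd key

theorem pow_inj' (σ : Equiv.Perm (Fin n)) (c : Fin n) {a b : ℕ}
    (ha : a < Function.minimalPeriod (⇑σ) c) (hb : b < Function.minimalPeriod (⇑σ) c)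
    (h : (σ ^ (a + 1)) c = (σ ^ (b + 1)) c) : a = b := by
  rcases le_total a b with hle | hle
  · have := pow_inj σ c (by omega) (by omega) h; omega
  · have := pow_inj σ c (b := a + 1) (by omega) (by omega) h.symm; omega

theorem mem_headsList {σ : Equiv.Perm (Fin n)} {c : Fin n} :
    c ∈ headsList σ ↔ ∀ k : ℕ, c ≤ (σ ^ k) c := by
  classical
  unfold headsList
  rw [Finset.mem_sort, Finset.mem_filter]
  simp

theorem heads_sorted (σ : Equiv.Perm (Fin n)) : List.Pairwise (· < ·) (headsList σ) := by
  classical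
  unfold headsList
  exact (Finset.sortedLT_sort _).pairwise

theorem cycleList_length (σ : Equiv.Perm (Fin n)) (c : Fin n) :
    (cycleList σ c).length = Function.minimalPeriod (⇑σ) c := by
  unfold cycleList; simp

theorem cycleList_getElem (σ : Equiv.Perm (Fin n)) (c : Fin n) {k : ℕ}
    (hk : k < Function.minimalPeriod (⇑σ) c) :
    (cycleList σ c)[k]'(by rw [cycleList_length]; exact hk) = (σ ^ (k + 1)) c := by
  unfold cycleList; simp

theorem mem_cycleList {σ : Equiv.Perm (Fin n)} {c x : Fin n} :
    x ∈ cycleList σ c ↔ ∃ k, k < Function.minimalPeriod (⇑σ) c ∧ (σ ^ (k + 1)) c = x := by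
  unfold cycleList
  simp only [List.mem_map, List.mem_range]

theorem le_of_mem_cycleList {σ : Equiv.Perm (Fin n)} {c x : Fin n}
    (hc : ∀ k : ℕ, c ≤ (σ ^ k) c) (hx : x ∈ cycleList σ c) : c ≤ x := by
  obtain ⟨k, -, rfl⟩ := mem_cycleList.1 hx
  exact hc _

theorem mp_pow_apply (σ : Equiv.Perm (Fin n)) (x : Fin n) (t : ℕ) :
    Function.minimalPeriod (⇑σ) ((σ ^ t) x) = Function.minimalPeriod (⇑σ) x := by
  apply le_antisymm
  · apply Function.IsPeriodicPt.minimalPeriod_le (mp_pos σ x)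
    show (⇑σ)^[Function.minimalPeriod (⇑σ) x] ((σ ^ t) x) = (σ ^ t) x
    rw [← Equiv.Perm.coe_pow, ← Equiv.Perm.mul_apply, ← pow_add, add_comm, pow_add,
      Equiv.Perm.mul_apply, pow_mp]
  · apply Function.IsPeriodicPt.minimalPeriod_le (mp_pos σ ((σ ^ t) x))
    show (⇑σ)^[Function.minimalPeriod (⇑σ) ((σ ^ t) x)] x = x
    rw [← Equiv.Perm.coe_pow]
    apply (σ ^ t).injective
    rw [← Equiv.Perm.mul_apply, ← pow_add, add_comm, pow_add, Equiv.Perm.mul_apply]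
    exact pow_mp σ ((σ ^ t) x)

theorem exists_head (σ : Equiv.Perm (Fin n)) (x : Fin n) :
    ∃ c ∈ headsList σ, ∃ k, k < Function.minimalPeriod (⇑σ) c ∧ (σ ^ (k + 1)) c = x := by
  classical
  have hppos : 0 < Function.minimalPeriod (⇑σ) x := mp_pos σ x
  obtain ⟨S, hS⟩ : ∃ S : Finset (Fin n),
      S = (Finset.range (Function.minimalPeriod (⇑σ) x)).image (fun k => (σ ^ k) x) := ⟨_, rfl⟩
  have hSne : S.Nonempty := ⟨x, by
    rw [hS]
    exact Finset.mem_image.2 ⟨0, Finset.mem_range.2 hppos, by simp⟩⟩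
  obtain ⟨c, hc⟩ : ∃ c, c = S.min' hSne := ⟨_, rfl⟩
  have hmemS : ∀ j : ℕ, (σ ^ j) x ∈ S := by
    intro j
    rw [hS]
    exact Finset.mem_image.2 ⟨j % _, Finset.mem_range.2 (Nat.mod_lt _ hppos),
      (pow_mod σ x j).symm⟩
  have hcS : c ∈ S := hc ▸ S.min'_mem hSne
  have hle : ∀ y ∈ S, c ≤ y := fun y hy => hc ▸ S.min'_le y hy
  rw [hS] at hcS
  obtain ⟨t, ht, hct⟩ := Finset.mem_image.1 hcS
  rw [Finset.mem_range] at ht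
  have hHd : ∀ k : ℕ, c ≤ (σ ^ k) c := by
    intro k
    have hrw : (σ ^ k) c = (σ ^ (k + t)) x := by
      rw [← hct, ← Equiv.Perm.mul_apply, ← pow_add]
    rw [hrw]
    exact hle _ (hmemS _)
  have hchd : c ∈ headsList σ := mem_headsList.2 hHd
  have hmpc : Function.minimalPeriod (⇑σ) c = Function.minimalPeriod (⇑σ) x := by
    rw [← hct, mp_pow_apply]
  refine ⟨c, hchd, ?_⟩
  rw [hmpc]
  rcases Nat.eq_zero_or_pos t with rfl | htpos
  · refine ⟨Function.minimalPeriod (⇑σ) x - 1, by omega, ?_⟩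
    have h1 : (σ ^ (Function.minimalPeriod (⇑σ) x - 1 + 1)) c = c := by
      rw [show Function.minimalPeriod (⇑σ) x - 1 + 1 = Function.minimalPeriod (⇑σ) x by omega,
        ← hmpc, pow_mp]
    rw [h1, ← hct]
    simp
  · refine ⟨Function.minimalPeriod (⇑σ) x - t - 1, by omega, ?_⟩
    rw [show Function.minimalPeriod (⇑σ) x - t - 1 + 1 = Function.minimalPeriod (⇑σ) x - t
        by omega, ← hct, ← Equiv.Perm.mul_apply, ← pow_add,
      show Function.minimalPeriod (⇑σ) x - t + t = Function.minimalPeriod (⇑σ) x by omega]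
    exact pow_mp σ x

theorem exists_pow_back (σ : Equiv.Perm (Fin n)) (c : Fin n) (b : ℕ) :
    ∃ u, (σ ^ u) ((σ ^ b) c) = c := by
  set m := Function.minimalPeriod (⇑σ) c with hm
  have hmpos : 0 < m := mp_pos σ c
  refine ⟨m * (b + 1) - b, ?_⟩
  rw [← Equiv.Perm.mul_apply, ← pow_add]
  have hble : b ≤ m * (b + 1) := by nlinarith
  rw [show m * (b + 1) - b + b = m * (b + 1) by omega]
  rw [pow_mod, ← hm, Nat.mul_mod_right]
  simp

theorem head_eq {σ : Equiv.Perm (Fin n)} {c c' : Fin n}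
    (hc : ∀ k : ℕ, c ≤ (σ ^ k) c) (hc' : ∀ k : ℕ, c' ≤ (σ ^ k) c')
    {a b : ℕ} (h : (σ ^ a) c = (σ ^ b) c') : c = c' := by
  obtain ⟨u, hu⟩ := exists_pow_back σ c' b
  obtain ⟨v, hv⟩ := exists_pow_back σ c a
  apply le_antisymm
  · calc c ≤ (σ ^ (u + a)) c := hc _
      _ = c' := by rw [pow_add, Equiv.Perm.mul_apply, h, hu]
  · calc c' ≤ (σ ^ (v + b)) c' := hc' _
      _ = c := by rw [pow_add, Equiv.Perm.mul_apply, ← h, hv]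

theorem word_nodup (σ : Equiv.Perm (Fin n)) : (cycleTransformWord σ).Nodup := by
  unfold cycleTransformWord
  rw [List.nodup_flatMap]
  constructor
  · intro c _
    unfold cycleList
    apply List.Nodup.map_on _ List.nodup_range
    intro a ha b hb hab
    rw [List.mem_range] at ha hb
    exact pow_inj' σ c ha hb hab
  · apply List.Pairwise.imp_of_mem _ (heads_sorted σ)
    intro c c' hcm hcm' hlt
    intro x hx hx'
    obtain ⟨a, _, ha⟩ := mem_cycleList.1 hx
    obtain ⟨b, _, hb⟩ := mem_cycleList.1 hx'
    have : c = c' := head_eq (mem_headsList.1 hcm) (mem_headsList.1 hcm') (ha.trans hb.symm)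
    exact absurd this (ne_of_lt hlt)

theorem mem_word (σ : Equiv.Perm (Fin n)) (x : Fin n) : x ∈ cycleTransformWord σ := by
  obtain ⟨c, hc, k, hk, hx⟩ := exists_head σ x
  unfold cycleTransformWord
  exact List.mem_flatMap.2 ⟨c, hc, mem_cycleList.2 ⟨k, hk, hx⟩⟩

theorem word_length (σ : Equiv.Perm (Fin n)) : (cycleTransformWord σ).length = n := by
  classical
  have h1 : (cycleTransformWord σ).toFinset = Finset.univ := by
    ext x; simp [mem_word]
  have h2 := List.toFinset_card_of_nodup (word_nodup σ)
  rw [h1, Finset.card_univ, Fintype.card_fin] at h2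
  exact h2.symm

theorem ctFun_eq (σ : Equiv.Perm (Fin n)) (i : Fin n) :
    ctFun σ i = (cycleTransformWord σ)[i.val]'(by rw [word_length]; exact i.isLt) := by
  unfold ctFun
  exact List.getD_eq_getElem _ _ _

theorem ctFun_inj (σ : Equiv.Perm (Fin n)) {i j : Fin n} (h : ctFun σ i = ctFun σ j) :
    i = j := by
  rw [ctFun_eq, ctFun_eq] at h
  exact Fin.ext (((word_nodup σ).getElem_inj_iff).1 h)

section Split

variable (σ : Equiv.Perm (Fin n)) {pre post : List (Fin n)} {c : Fin n}

theorem c_mem_of_split (hsplit : headsList σ = pre ++ c :: post) : c ∈ headsList σ := by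
  rw [hsplit]; simp

theorem word_split (hsplit : headsList σ = pre ++ c :: post) :
    cycleTransformWord σ =
      pre.flatMap (cycleList σ) ++ (cycleList σ c ++ post.flatMap (cycleList σ)) := by
  unfold cycleTransformWord
  rw [hsplit, List.flatMap_append, List.flatMap_cons]

theorem pos_lt (hsplit : headsList σ = pre ++ c :: post) {k : ℕ}
    (hk : k < Function.minimalPeriod (⇑σ) c) :
    (pre.flatMap (cycleList σ)).length + k < n := by
  have h := word_length σ
  rw [word_split σ hsplit] at h
  simp only [List.length_append, cycleList_length] at h
  omega

theorem word_getElem (hsplit : headsList σ = pre ++ c :: post) {k : ℕ}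
    (hk : k < Function.minimalPeriod (⇑σ) c) {i : ℕ}
    (hi : i = (pre.flatMap (cycleList σ)).length + k)
    (hlt : i < (cycleTransformWord σ).length) :
    (cycleTransformWord σ)[i] = (σ ^ (k + 1)) c := by
  subst hi
  rw [List.getElem_of_eq (word_split σ hsplit)]
  rw [List.getElem_append_right (by omega)]
  simp only [Nat.add_sub_cancel_left]
  rw [List.getElem_append_left (by rw [cycleList_length]; exact hk)]
  exact cycleList_getElem σ c hk

theorem suffix_ge (hsplit : headsList σ = pre ++ c :: post) {k : ℕ}
    (hk : k ≤ Function.minimalPeriod (⇑σ) c) {j : ℕ}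
    (hj : (pre.flatMap (cycleList σ)).length + k ≤ j)
    (hjl : j < (cycleTransformWord σ).length) :
    c ≤ (cycleTransformWord σ)[j] := by
  set A := pre.flatMap (cycleList σ) with hA
  have hcH : ∀ k : ℕ, c ≤ (σ ^ k) c := mem_headsList.1 (c_mem_of_split σ hsplit)
  have hpost : ∀ c'' ∈ post, c < c'' := by
    have hs := heads_sorted σ
    rw [hsplit] at hs
    exact (List.pairwise_cons.1 (List.pairwise_append.1 hs).2.1).1
  have hdrop : (cycleTransformWord σ).drop (A.length + k) =
      (cycleList σ c).drop k ++ post.flatMap (cycleList σ) := by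
    rw [word_split σ hsplit, List.drop_append,
      List.drop_eq_nil_of_le (as := pre.flatMap (cycleList σ)) (i := A.length + k) (by rw [hA]; omega),
      List.nil_append, show A.length + k - (pre.flatMap (cycleList σ)).length = k by rw [hA]; omega,
      List.drop_append_of_le_length (by rw [cycleList_length]; exact hk)]
  obtain ⟨d, rfl⟩ : ∃ d, j = A.length + k + d := ⟨j - (A.length + k), by omega⟩
  have hlen : d < ((cycleTransformWord σ).drop (A.length + k)).length := by
    rw [List.length_drop]; omega
  have hmem : (cycleTransformWord σ)[A.length + k + d] ∈
      (cycleTransformWord σ).drop (A.length + k) := by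
    have h2 := List.getElem_drop (xs := cycleTransformWord σ) (i := A.length + k) (j := d) (h := hlen)
    rw [← h2]
    exact List.getElem_mem hlen
  rw [hdrop] at hmem
  rcases List.mem_append.1 hmem with hmem | hmem
  · exact le_of_mem_cycleList hcH (List.mem_of_mem_drop hmem)
  · obtain ⟨c'', hc'', hy⟩ := List.mem_flatMap.1 hmem
    have hc''h : c'' ∈ headsList σ := by rw [hsplit]; simp [hc'']
    have := le_of_mem_cycleList (mem_headsList.1 hc''h) hy
    exact le_of_lt (lt_of_lt_of_le (hpost c'' hc'') this)

theorem anchor_last (hsplit : headsList σ = pre ++ c :: post) {i : Fin n}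
    (hi : i.val = (pre.flatMap (cycleList σ)).length + (Function.minimalPeriod (⇑σ) c - 1)) :
    IsAnchor σ i := by
  have hmpos := mp_pos σ c
  intro j hj
  rw [ctFun_eq, ctFun_eq]
  have hv : (cycleTransformWord σ)[i.val]'(by rw [word_length]; exact i.isLt) = c := by
    rw [word_getElem σ hsplit (k := Function.minimalPeriod (⇑σ) c - 1) (by omega) hi]
    rw [show Function.minimalPeriod (⇑σ) c - 1 + 1 = Function.minimalPeriod (⇑σ) c by omega]
    exact pow_mp σ c
  rw [hv]
  exact suffix_ge σ hsplit (k := Function.minimalPeriod (⇑σ) c - 1) (by omega)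
    (le_trans (le_of_eq hi.symm) hj) (by rw [word_length]; exact j.isLt)

theorem not_anchor (hsplit : headsList σ = pre ++ c :: post) {k : ℕ}
    (hk1 : k + 1 < Function.minimalPeriod (⇑σ) c) {i : Fin n}
    (hi : i.val = (pre.flatMap (cycleList σ)).length + k) :
    ¬ IsAnchor σ i := by
  have hmpos := mp_pos σ c
  intro h
  have hjlt : (pre.flatMap (cycleList σ)).length + (Function.minimalPeriod (⇑σ) c - 1) < n :=
    pos_lt σ hsplit (by omega)
  have hjval : (⟨(pre.flatMap (cycleList σ)).length + (Function.minimalPeriod (⇑σ) c - 1),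
      hjlt⟩ : Fin n).val =
      (pre.flatMap (cycleList σ)).length + (Function.minimalPeriod (⇑σ) c - 1) := rfl
  set j : Fin n := ⟨(pre.flatMap (cycleList σ)).length + (Function.minimalPeriod (⇑σ) c - 1), hjlt⟩
  have hij : i ≤ j := by
    rw [Fin.le_def, hi, hjval]; omega
  have hle := h j hij
  rw [ctFun_eq, ctFun_eq] at hle
  have hvi : (cycleTransformWord σ)[i.val]'(by rw [word_length]; exact i.isLt) =
      (σ ^ (k + 1)) c := word_getElem σ hsplit (by omega) hi _
  have hvj : (cycleTransformWord σ)[j.val]'(by rw [word_length]; exact j.isLt) = c := by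
    rw [word_getElem σ hsplit (k := Function.minimalPeriod (⇑σ) c - 1) (by omega) rfl]
    rw [show Function.minimalPeriod (⇑σ) c - 1 + 1 = Function.minimalPeriod (⇑σ) c by omega]
    exact pow_mp σ c
  rw [hvi, hvj] at hle
  have hcH : ∀ k : ℕ, c ≤ (σ ^ k) c := mem_headsList.1 (c_mem_of_split σ hsplit)
  have : c < (σ ^ (k + 1)) c :=
    lt_of_le_of_ne (hcH _) (Ne.symm (pow_ne σ c (by omega) (by omega)))
  exact absurd (le_antisymm hle (hcH _)) (ne_of_lt this).symm

end Split

/-- Master structural lemma: canonical position of each value in the word. -/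
theorem master (σ : Equiv.Perm (Fin n)) (x : Fin n) :
    ∃ (p : Fin n) (c : Fin n) (k : ℕ),
      k < Function.minimalPeriod (⇑σ) c ∧
      (σ ^ (k + 1)) c = x ∧
      ctFun σ p = x ∧
      (∀ k' : ℕ, c ≤ (σ ^ k') c) ∧
      σ.symm x = (σ ^ k) c ∧
      (k + 1 = Function.minimalPeriod (⇑σ) c → x = c) ∧
      (k + 1 < Function.minimalPeriod (⇑σ) c → x ≠ c) ∧
      (k + 1 = Function.minimalPeriod (⇑σ) c → IsAnchor σ p) ∧
      (k + 1 < Function.minimalPeriod (⇑σ) c → ¬ IsAnchor σ p) ∧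
      (0 < k → c < (σ ^ k) c) ∧
      (0 < k → ∃ j : Fin n, j.val + 1 = p.val ∧ ctFun σ j = (σ ^ k) c ∧ ¬ IsAnchor σ j) ∧
      (k = 0 → p.val ≠ 0 → ∃ j : Fin n, j.val + 1 = p.val ∧ ctFun σ j < c ∧ IsAnchor σ j) := by
  obtain ⟨c, hcmem, k, hk, hx⟩ := exists_head σ x
  obtain ⟨pre, post, hsplit⟩ := List.append_of_mem hcmem
  obtain ⟨A, hA⟩ : ∃ A : List (Fin n), A = pre.flatMap (cycleList σ) := ⟨_, rfl⟩
  have hplt : A.length + k < n := by rw [hA]; exact pos_lt σ hsplit hk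
  obtain ⟨p, hpval⟩ : ∃ p : Fin n, (p : ℕ) = A.length + k := ⟨⟨A.length + k, hplt⟩, rfl⟩
  have hcH : ∀ k' : ℕ, c ≤ (σ ^ k') c := mem_headsList.1 hcmem
  have hctp : ctFun σ p = x := by
    rw [ctFun_eq]
    rw [word_getElem σ hsplit hk (by rw [hpval, hA])]
    exact hx
  have hsymm : σ.symm x = (σ ^ k) c := by
    rw [Equiv.symm_apply_eq, ← Equiv.Perm.mul_apply, ← pow_succ']
    exact hx.symm
  refine ⟨p, c, k, hk, hx, hctp, hcH, hsymm, ?_, ?_, ?_, ?_, ?_, ?_, ?_⟩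
  · intro heq
    rw [← hx, heq]
    exact pow_mp σ c
  · intro hlt
    rw [← hx]
    exact pow_ne σ c (by omega) hlt
  · intro heq
    exact anchor_last σ hsplit (by rw [hpval, hA]; omega)
  · intro hlt
    exact not_anchor σ hsplit hlt (by rw [hpval, hA])
  · intro hkpos
    exact lt_of_le_of_ne (hcH _) (Ne.symm (pow_ne σ c hkpos (by omega)))
  · intro hkpos
    have hjlt : A.length + (k - 1) < n := by rw [hA]; exact pos_lt σ hsplit (by omega)
    have hjval : ((⟨A.length + (k - 1), hjlt⟩ : Fin n) : ℕ) = A.length + (k - 1) := rfl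
    refine ⟨⟨A.length + (k - 1), hjlt⟩, by rw [hjval, hpval]; omega, ?_, ?_⟩
    · rw [ctFun_eq]
      rw [word_getElem σ hsplit (k := k - 1) (by omega) (by rw [hjval, hA])]
      rw [show k - 1 + 1 = k by omega]
    · exact not_anchor σ hsplit (k := k - 1) (by omega) (by rw [hjval, hA])
  · intro hk0 hpne
    have hApos : 0 < A.length + k := by rw [← hpval]; exact Nat.pos_of_ne_zero hpne
    have hAne : pre ≠ [] := by
      intro hnil
      rw [hA, hnil, hk0] at hApos
      simp at hApos
    obtain ⟨pre', c', hpre⟩ : ∃ L b, pre = L ++ [b] := by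
      rcases List.eq_nil_or_concat pre with h | ⟨L, b, h⟩
      · exact absurd h hAne
      · exact ⟨L, b, by rw [h, List.concat_eq_append]⟩
    have hsplit' : headsList σ = pre' ++ c' :: (c :: post) := by
      rw [hsplit, hpre, List.append_assoc]
      rfl
    have hm'pos := mp_pos σ c'
    have hAlen : A.length = (pre'.flatMap (cycleList σ)).length +
        Function.minimalPeriod (⇑σ) c' := by
      rw [hA, hpre, List.flatMap_append, List.length_append]
      simp [cycleList_length]
    have hjval : A.length + k - 1 = (pre'.flatMap (cycleList σ)).length +
        (Function.minimalPeriod (⇑σ) c' - 1) := by omega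
    have hjlt : A.length + k - 1 < n := by omega
    have hjval0 : ((⟨A.length + k - 1, hjlt⟩ : Fin n) : ℕ) = A.length + k - 1 := rfl
    have hjv : ctFun σ (⟨A.length + k - 1, hjlt⟩ : Fin n) = c' := by
      rw [ctFun_eq]
      rw [word_getElem σ hsplit' (k := Function.minimalPeriod (⇑σ) c' - 1) (by omega)
        (by rw [hjval0]; exact hjval)]
      rw [show Function.minimalPeriod (⇑σ) c' - 1 + 1 = Function.minimalPeriod (⇑σ) c' by omega]
      exact pow_mp σ c'
    have hlt' : c' < c := by
      have hs := heads_sorted σ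
      rw [hsplit'] at hs
      exact ((List.pairwise_cons.1 (List.pairwise_append.1 hs).2.1).1) c (by simp)
    refine ⟨⟨A.length + k - 1, hjlt⟩, by rw [hjval0, hpval]; omega,
      by rw [hjv]; exact hlt', anchor_last σ hsplit' (by rw [hjval0]; exact hjval)⟩

theorem not_ascent_and_descent {σ : Equiv.Perm (Fin n)} {i : Fin n}
    (ha : IsAscentPos σ i) (hd : IsDescentPos σ i) : False := by
  obtain ⟨j, hj1, hj2⟩ := hd
  rcases ha with h0 | ⟨j', hj'1, hj'2⟩
  · omega
  · have : j' = j := Fin.ext (by omega)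
    subst this
    exact absurd (hj'2.trans hj2) (lt_irrefl _)

end CTProof

/-- The over-diagonal values of `σ` are exactly the non-singlet ascent values of its cycle
transform, and the under-diagonal values of `σ` are exactly the descent values of its
cycle transform. -/
theorem overUnder_eq_ascentDescent (n : ℕ) (σ : Equiv.Perm (Fin n)) :
    (∀ x : Fin n, σ.symm x < x ↔
      ∃ i : Fin n, ctFun σ i = x ∧ IsAscentPos σ i ∧ ¬ IsSingletPos σ i) ∧
    (∀ x : Fin n, x < σ.symm x ↔
      ∃ i : Fin n, ctFun σ i = x ∧ IsDescentPos σ i) := by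
  constructor
  · intro x
    obtain ⟨p, c, k, hk, hx, hctp, hcH, hsymm, hmeq, hmlt, hanch, hnanch, hklt, hprev, hprev0⟩ :=
      CTProof.master σ x
    have hcx : c ≤ x := by rw [← hx]; exact hcH _
    constructor
    · intro hover
      have hk1 : k + 1 < Function.minimalPeriod (⇑σ) c := by
        rcases lt_or_eq_of_le (Nat.succ_le_of_lt hk) with h | h
        · exact h
        · exfalso
          have hxc := hmeq h
          rw [hsymm] at hover
          have := hcH k
          rw [hxc] at hover
          exact absurd (lt_of_le_of_lt this hover) (lt_irrefl _)
      refine ⟨p, hctp, ?_, ?_⟩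
      · rcases Nat.eq_zero_or_pos k with hk0 | hkpos
        · rcases Nat.eq_zero_or_pos p.val with hp0 | hppos
          · exact Or.inl hp0
          · obtain ⟨j, hj1, hj2, _⟩ := hprev0 hk0 (by omega)
            exact Or.inr ⟨j, hj1, by rw [hctp]; exact lt_of_lt_of_le hj2 hcx⟩
        · obtain ⟨j, hj1, hj2, _⟩ := hprev hkpos
          refine Or.inr ⟨j, hj1, ?_⟩
          rw [hctp, hj2, ← hsymm]
          exact hover
      · intro hsing
        exact (hnanch hk1) hsing.1
    · rintro ⟨i, hi, hasc, hnsing⟩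
      have hip : i = p := CTProof.ctFun_inj σ (by rw [hi, hctp])
      subst hip
      rcases lt_or_eq_of_le (Nat.succ_le_of_lt hk) with hk1 | hk1
      · -- k + 1 < m : x ≠ c, so c < x
        rcases Nat.eq_zero_or_pos k with hk0 | hkpos
        · rw [hsymm, hk0, pow_zero]
          simp only [Equiv.Perm.one_apply]
          exact lt_of_le_of_ne hcx (Ne.symm (hmlt hk1))
        · obtain ⟨j, hj1, hj2, _⟩ := hprev hkpos
          rcases hasc with h0 | ⟨j', hj'1, hj'2⟩
          · omega
          · have : j' = j := Fin.ext (by omega)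
            subst this
            rw [hj2, hi] at hj'2
            rw [hsymm]
            exact hj'2
      · -- k + 1 = m : x = c, derive contradiction with ascent ∧ ¬singlet
        exfalso
        have hxc := hmeq hk1
        rcases Nat.eq_zero_or_pos k with hk0 | hkpos
        · -- m = 1 : singlet position
          apply hnsing
          refine ⟨hanch hk1, ?_⟩
          rcases Nat.eq_zero_or_pos i.val with hp0 | hppos
          · exact Or.inl hp0
          · obtain ⟨j, hj1, _, hj3⟩ := hprev0 hk0 (by omega)
            exact Or.inr ⟨j, hj1, hj3⟩
        · -- m ≥ 2 : descent, contradicting ascent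
          obtain ⟨j, hj1, hj2, _⟩ := hprev hkpos
          apply CTProof.not_ascent_and_descent hasc
          refine ⟨j, hj1, ?_⟩
          rw [hi, hj2, hxc]
          exact hklt hkpos
  · intro x
    obtain ⟨p, c, k, hk, hx, hctp, hcH, hsymm, hmeq, hmlt, hanch, hnanch, hklt, hprev, hprev0⟩ :=
      CTProof.master σ x
    have hcx : c ≤ x := by rw [← hx]; exact hcH _
    constructor
    · intro hunder
      have hkpos : 0 < k := by
        rcases Nat.eq_zero_or_pos k with hk0 | hkpos
        · exfalso
          rw [hsymm, hk0, pow_zero] at hunder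
          simp only [Equiv.Perm.one_apply] at hunder
          exact absurd (lt_of_le_of_lt hcx hunder) (lt_irrefl _)
        · exact hkpos
      obtain ⟨j, hj1, hj2, _⟩ := hprev hkpos
      refine ⟨p, hctp, j, hj1, ?_⟩
      rw [hctp, hj2, ← hsymm]
      exact hunder
    · rintro ⟨i, hi, j0, hj01, hj02⟩
      have hip : i = p := CTProof.ctFun_inj σ (by rw [hi, hctp])
      subst hip
      rcases Nat.eq_zero_or_pos k with hk0 | hkpos
      · exfalso
        rcases Nat.eq_zero_or_pos i.val with hp0 | hppos
        · omega
        · obtain ⟨j, hj1, hj2, _⟩ := hprev0 hk0 (by omega)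
          have : j0 = j := Fin.ext (by omega)
          subst this
          rw [hi] at hj02
          exact absurd (hj02.trans (lt_of_lt_of_le hj2 hcx)) (lt_irrefl _)
      · obtain ⟨j, hj1, hj2, _⟩ := hprev hkpos
        have : j0 = j := Fin.ext (by omega)
        subst this
        rw [hi, hj2] at hj02
        rw [hsymm]
        exact hj02
end

section
/- Daisy chaining is a bijection between permutations of {1,...,n} and single-cycle permutations of {1,...,n+1}. -/
/-- Daisy chaining of `σ`: with cycle heads `c₁ < … < c_k`, define `σ'` on `{0,…,n}` by
`σ'(cᵢ) = σ(cᵢ₊₁)` for `i < k`, `σ'(c_k) = 0`, `σ'(0) = σ(c₁)` and `σ'(j) = σ(j)`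
otherwise, then shift `{0,…,n}` up to `{1,…,n+1}`.  Here `Fin (n+1)` models `{0,…,n}`,
with `Fin.succ` embedding `Fin n` as `{1,…,n}`. -/
noncomputable def daisy {n : ℕ} (σ : Equiv.Perm (Fin n)) : Fin (n + 1) → Fin (n + 1) :=
  fun x =>
    Fin.cases ((headsList σ).head?.elim 0 fun c => (σ c).succ)
      (fun y =>
        if y ∈ headsList σ then
          (((headsList σ).drop ((headsList σ).idxOf y + 1)).head?.elim 0
            fun c => (σ c).succ)
        else (σ y).succ) x

theorem List.Pairwise.get_strictMono {α : Type*} [Preorder α] {l : List α}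
    (h : l.Pairwise (· < ·)) : StrictMono l.get :=
  (List.sortedLT_iff_pairwise.2 h).strictMono_get

theorem List.Pairwise.le_of_lt {α : Type*} [Preorder α] {l : List α}
    (h : l.Pairwise (· < ·)) : l.Pairwise (· ≤ ·) :=
  h.imp (fun hab => _root_.le_of_lt hab)

namespace Daisy

variable {n : ℕ}

lemma head?_drop {α : Type*} (l : List α) (i : ℕ) : (l.drop i).head? = l[i]? := by
  rw [List.head?_eq_getElem?, List.getElem?_drop]; simp

lemma mem_headsList {σ : Equiv.Perm (Fin n)} {x : Fin n} :
    x ∈ headsList σ ↔ ∀ k : ℕ, x ≤ (σ ^ k) x := by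
  classical
  simp [headsList, Finset.mem_sort, Finset.mem_filter]

lemma headsList_sorted (σ : Equiv.Perm (Fin n)) : (headsList σ).Pairwise (· < ·) :=
  List.sortedLT_iff_pairwise.1 (Finset.sortedLT_sort _)

lemma headsList_nodup (σ : Equiv.Perm (Fin n)) : (headsList σ).Nodup :=
  (headsList_sorted σ).nodup

lemma pow_fixed {α : Type*} (g : Equiv.Perm α) (x : α) (N : ℕ) (h : (g ^ N) x = x) (t : ℕ) :
    (g ^ (N * t)) x = x := by
  induction t with
  | zero => simp
  | succ t ih => rw [Nat.mul_succ, pow_add, Equiv.Perm.mul_apply, h, ih]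

/-- apply a power with exponent mod a period -/
lemma pow_mod_apply {α : Type*} (g : Equiv.Perm α) (x : α) (N : ℕ) (h : (g ^ N) x = x) (j : ℕ) :
    (g ^ j) x = (g ^ (j % N)) x := by
  conv_lhs => rw [← Nat.mod_add_div j N]
  rw [pow_add, Equiv.Perm.mul_apply, pow_fixed g x N h]

lemma pow_orderOf_apply (σ : Equiv.Perm (Fin n)) (x : Fin n) : (σ ^ orderOf σ) x = x := by
  rw [pow_orderOf_eq_one]; rfl

/-- every σ-orbit contains a head -/
lemma exists_pow_mem_headsList (σ : Equiv.Perm (Fin n)) (x : Fin n) :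
    ∃ m : ℕ, (σ ^ m) x ∈ headsList σ := by
  classical
  set N := orderOf σ with hN
  have hNpos : 0 < N := orderOf_pos σ
  set O : Finset (Fin n) := (Finset.range N).image (fun k => (σ ^ k) x) with hO
  have hxO : x ∈ O := by
    refine Finset.mem_image.2 ⟨0, Finset.mem_range.2 hNpos, by simp⟩
  obtain ⟨m, hm, hc⟩ := Finset.mem_image.1 (O.min'_mem ⟨x, hxO⟩)
  refine ⟨m, mem_headsList.2 fun k => ?_⟩
  have : (σ ^ k) ((σ ^ m) x) = (σ ^ ((k + m) % N)) x := by
    rw [← Equiv.Perm.mul_apply, ← pow_add, pow_mod_apply σ x N (pow_orderOf_apply σ x)]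
  rw [this, hc]
  exact Finset.min'_le _ _ (Finset.mem_image.2 ⟨(k + m) % N, Finset.mem_range.2 (Nat.mod_lt _ hNpos), rfl⟩)

/-- a head in an orbit is ≤ every element of the orbit -/
lemma head_le_orbit {σ : Equiv.Perm (Fin n)} {x : Fin n} {a : ℕ}
    (ha : (σ ^ a) x ∈ headsList σ) (b : ℕ) : (σ ^ a) x ≤ (σ ^ b) x := by
  have hN : (σ ^ orderOf σ) x = x := pow_orderOf_apply σ x
  have hNpos : 0 < orderOf σ := orderOf_pos σ
  have key : (σ ^ (b + a * (orderOf σ - 1))) ((σ ^ a) x) = (σ ^ b) x := by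
    rw [← Equiv.Perm.mul_apply, ← pow_add]
    have : b + a * (orderOf σ - 1) + a = b + orderOf σ * a := by
      have h1 : 1 ≤ orderOf σ := hNpos
      have := Nat.sub_add_cancel h1
      nlinarith [this]
    rw [this, pow_add, Equiv.Perm.mul_apply, pow_fixed σ x _ hN]
  calc (σ ^ a) x ≤ (σ ^ (b + a * (orderOf σ - 1))) ((σ ^ a) x) := mem_headsList.1 ha _
    _ = (σ ^ b) x := key

lemma head_unique {σ : Equiv.Perm (Fin n)} {x : Fin n} {a b : ℕ}
    (ha : (σ ^ a) x ∈ headsList σ) (hb : (σ ^ b) x ∈ headsList σ) : (σ ^ a) x = (σ ^ b) x :=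
  le_antisymm (head_le_orbit ha b) (head_le_orbit hb a)

noncomputable def headOf (σ : Equiv.Perm (Fin n)) (y : Fin n) : Fin n :=
  (σ ^ (Nat.find (exists_pow_mem_headsList σ y))) y

lemma headOf_mem (σ : Equiv.Perm (Fin n)) (y : Fin n) : headOf σ y ∈ headsList σ :=
  Nat.find_spec (exists_pow_mem_headsList σ y)

lemma headOf_le (σ : Equiv.Perm (Fin n)) (y : Fin n) : headOf σ y ≤ y := by
  simpa [headOf] using head_le_orbit (headOf_mem σ y) 0

lemma headOf_pow (σ : Equiv.Perm (Fin n)) (y : Fin n) (a : ℕ) :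
    headOf σ ((σ ^ a) y) = headOf σ y := by
  have h1 : headOf σ ((σ ^ a) y) = (σ ^ (Nat.find (exists_pow_mem_headsList σ ((σ ^ a) y)) + a)) y := by
    rw [headOf, pow_add]; rfl
  have m1 : (σ ^ (Nat.find (exists_pow_mem_headsList σ ((σ ^ a) y)) + a)) y ∈ headsList σ := by
    rw [← h1]; exact headOf_mem σ _
  exact h1.trans (head_unique m1 (headOf_mem σ y))

lemma headOf_apply (σ : Equiv.Perm (Fin n)) (y : Fin n) : headOf σ (σ y) = headOf σ y := by
  simpa using headOf_pow σ y 1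

lemma headOf_eq_self {σ : Equiv.Perm (Fin n)} {y : Fin n} (h : y ∈ headsList σ) :
    headOf σ y = y := by
  have h0 : (σ ^ 0) y ∈ headsList σ := by simpa using h
  simpa [headOf] using head_unique (headOf_mem σ y) h0

section Generic

variable (σ : Equiv.Perm (Fin n)) (τ : Equiv.Perm (Fin (n + 1)))

lemma daisy_zero : daisy σ 0 = ((headsList σ).head?.elim 0 fun c => (σ c).succ) := by
  simp [daisy]

lemma daisy_succ (y : Fin n) : daisy σ y.succ =
    (if y ∈ headsList σ then
      (((headsList σ).drop ((headsList σ).idxOf y + 1)).head?.elim 0 fun c => (σ c).succ)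
    else (σ y).succ) := by
  simp [daisy]

variable {σ τ} (hτ : ∀ x, τ x = daisy σ x)
include hτ

lemma tau_succ_not_mem {y : Fin n} (h : y ∉ headsList σ) : τ y.succ = (σ y).succ := by
  rw [hτ, daisy_succ, if_neg h]

lemma tau_succ_mem {y : Fin n} (h : y ∈ headsList σ) :
    τ y.succ = (((headsList σ)[(headsList σ).idxOf y + 1]?).elim 0 fun c => (σ c).succ) := by
  rw [hτ, daisy_succ, if_pos h, head?_drop]

lemma tau_follow : ∀ (m : ℕ) (y : Fin n), (∀ j, j < m → (σ ^ j) y ∉ headsList σ) →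
    (τ ^ m) y.succ = ((σ ^ m) y).succ := by
  intro m
  induction m with
  | zero => intro y _; simp
  | succ m ih =>
    intro y hy
    have h1 : (τ ^ (m + 1)) y.succ = τ ((τ ^ m) y.succ) := by rw [pow_succ']; rfl
    rw [h1, ih y (fun j hj => hy j (Nat.lt_succ_of_lt hj)),
      tau_succ_not_mem hτ (hy m (Nat.lt_succ_self m))]
    congr 1
    rw [pow_succ']; rfl

lemma tau_reach_head (y : Fin n) : ∃ m : ℕ, (τ ^ m) y.succ = (headOf σ y).succ := by
  refine ⟨Nat.find (exists_pow_mem_headsList σ y), ?_⟩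
  rw [tau_follow hτ _ y (fun j hj => Nat.find_min _ hj)]; rfl

lemma tau_head_to_zero : ∀ (d : ℕ) (c : Fin n), c ∈ headsList σ →
    (headsList σ).length - (headsList σ).idxOf c ≤ d → ∃ m, (τ ^ m) c.succ = 0 := by
  intro d
  induction d with
  | zero =>
    intro c hc hd
    exact absurd hd (by have := List.idxOf_lt_length_iff.2 hc; omega)
  | succ d ih =>
    intro c hc hd
    have hlt : (headsList σ).idxOf c < (headsList σ).length := List.idxOf_lt_length_iff.2 hc
    rcases lt_or_ge ((headsList σ).idxOf c + 1) (headsList σ).length with h | h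
    · set c' := (headsList σ)[(headsList σ).idxOf c + 1] with hc'
      have hget : (headsList σ)[(headsList σ).idxOf c + 1]? = some c' :=
        List.getElem?_eq_some_iff.2 ⟨h, rfl⟩
      have hτc : τ c.succ = (σ c').succ := by
        rw [tau_succ_mem hτ hc, hget]; rfl
      have hc'mem : c' ∈ headsList σ := hc' ▸ List.getElem_mem _
      -- reach the head of σ c', which is c'
      have hhead : headOf σ (σ c') = c' := by
        rw [headOf_apply, headOf_eq_self hc'mem]
      obtain ⟨m₁, hm₁⟩ := tau_reach_head hτ (σ c')
      rw [hhead] at hm₁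
      have hidx : (headsList σ).idxOf c' = (headsList σ).idxOf c + 1 :=
        List.Nodup.idxOf_getElem (headsList_nodup σ) _ h
      obtain ⟨m₂, hm₂⟩ := ih c' hc'mem (by omega)
      refine ⟨m₂ + (m₁ + 1), ?_⟩
      have e1 : (τ ^ (m₂ + (m₁ + 1))) c.succ = (τ ^ m₂) ((τ ^ m₁) ((τ ^ 1) c.succ)) := by
        rw [pow_add, pow_add]; rfl
      rw [e1]
      simpa [hτc, hm₁] using hm₂
    · refine ⟨1, ?_⟩
      have : (headsList σ)[(headsList σ).idxOf c + 1]? = none := List.getElem?_eq_none h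
      simpa [this] using tau_succ_mem hτ hc

lemma tau_reach_zero (x : Fin (n + 1)) : ∃ m, (τ ^ m) x = 0 := by
  induction x using Fin.cases with
  | zero => exact ⟨0, rfl⟩
  | succ y =>
    obtain ⟨m₁, hm₁⟩ := tau_reach_head hτ y
    obtain ⟨m₂, hm₂⟩ := tau_head_to_zero hτ (headsList σ).length (headOf σ y) (headOf_mem σ y)
      (by omega)
    refine ⟨m₂ + m₁, ?_⟩
    rw [pow_add, Equiv.Perm.mul_apply, hm₁, hm₂]

lemma tau_transitive (x y : Fin (n + 1)) : ∃ k : ℕ, (τ ^ k) x = y := by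
  obtain ⟨m, hm⟩ := tau_reach_zero hτ x
  obtain ⟨m', hm'⟩ := tau_reach_zero hτ y
  set N := orderOf τ with hN
  have hNpos : 0 < N := orderOf_pos τ
  have hper : (τ ^ N) y = y := by rw [hN, pow_orderOf_eq_one]; rfl
  refine ⟨m + (m' * N - m'), ?_⟩
  have hle : m' ≤ m' * N := Nat.le_mul_of_pos_right _ hNpos
  have e1 : (τ ^ (m + (m' * N - m'))) x = (τ ^ (m' * N - m')) ((τ ^ m) x) := by
    rw [show m + (m' * N - m') = (m' * N - m') + m from Nat.add_comm _ _, pow_add]; rfl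
  rw [e1, hm, ← hm']
  have e2 : (τ ^ (m' * N - m')) ((τ ^ m') y) = (τ ^ (m' * N)) y := by
    rw [← Equiv.Perm.mul_apply, ← pow_add, Nat.sub_add_cancel hle]
  rw [e2, mul_comm, pow_fixed τ y N hper]

/-- characterisation of heads purely in terms of `τ`. -/
lemma mem_headsList_iff_Q (y : Fin n) :
    y ∈ headsList σ ↔
      ∀ m : ℕ, (∀ j, j ≤ m → (τ ^ j) y.succ ≠ 0) → y.succ ≤ (τ ^ m) y.succ := by
  constructor
  · intro hy
    have aux : ∀ m : ℕ, (∀ j, j ≤ m → (τ ^ j) y.succ ≠ 0) →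
        ∃ z : Fin n, (τ ^ m) y.succ = z.succ ∧ y ≤ headOf σ z := by
      intro m
      induction m with
      | zero => intro _; exact ⟨y, by simp, by rw [headOf_eq_self hy]⟩
      | succ m ih =>
        intro hm
        obtain ⟨z, hz, hle⟩ := ih (fun j hj => hm j (Nat.le_succ_of_le hj))
        have hstep : (τ ^ (m + 1)) y.succ = τ z.succ := by
          rw [pow_succ']
          show τ ((τ ^ m) y.succ) = _
          rw [hz]
        by_cases hzH : z ∈ headsList σ
        · have hyz : y ≤ z := by rwa [headOf_eq_self hzH] at hle
          rcases hsome : (headsList σ)[(headsList σ).idxOf z + 1]? with _ | c'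
          · exfalso
            refine hm (m + 1) le_rfl ?_
            rw [hstep, tau_succ_mem hτ hzH, hsome]; rfl
          · have hc'mem : c' ∈ headsList σ := by
              obtain ⟨hlt, rfl⟩ := List.getElem?_eq_some_iff.1 hsome
              exact List.getElem_mem _
            refine ⟨σ c', by rw [hstep, tau_succ_mem hτ hzH, hsome]; rfl, ?_⟩
            rw [headOf_apply, headOf_eq_self hc'mem]
            -- z < c' since c' is a later element of the sorted heads list
            have hzlt : z < c' := by
              obtain ⟨hlt, hc'⟩ := List.getElem?_eq_some_iff.1 hsome
              have hidx : (headsList σ).idxOf z < (headsList σ).length :=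
                List.idxOf_lt_length_iff.2 hzH
              have := (headsList_sorted σ).get_strictMono
                (show (⟨(headsList σ).idxOf z, hidx⟩ : Fin _) < ⟨(headsList σ).idxOf z + 1, hlt⟩
                  from by simp)
              simpa [List.get_eq_getElem, List.getElem_idxOf, hc'] using this
            exact le_of_lt (lt_of_le_of_lt hyz hzlt)
        · refine ⟨σ z, by rw [hstep, tau_succ_not_mem hτ hzH], ?_⟩
          rwa [headOf_apply]
    intro m hm
    obtain ⟨z, hz, hle⟩ := aux m hm
    rw [hz, Fin.succ_le_succ_iff]
    exact le_trans hle (headOf_le σ z)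
  · intro hQ
    by_contra hy
    set m := Nat.find (exists_pow_mem_headsList σ y) with hm
    have hfollow : ∀ j, j ≤ m → (τ ^ j) y.succ = ((σ ^ j) y).succ := by
      intro j hj
      exact tau_follow hτ j y (fun i hi => Nat.find_min _ (lt_of_lt_of_le hi hj))
    have hlt : headOf σ y < y :=
      lt_of_le_of_ne (headOf_le σ y) (fun h => hy (h ▸ headOf_mem σ y))
    have := hQ m (fun j hj => by rw [hfollow j hj]; exact Fin.succ_ne_zero _)
    rw [hfollow m le_rfl] at this
    have : y ≤ headOf σ y := by
      rwa [show ((σ ^ m) y) = headOf σ y from rfl, Fin.succ_le_succ_iff] at this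
    omega

end Generic

/-- two permutations with the same daisy chain are equal -/
lemma daisy_injective {σ σ' : Equiv.Perm (Fin n)} {τ : Equiv.Perm (Fin (n + 1))}
    (hτ : ∀ x, τ x = daisy σ x) (hτ' : ∀ x, τ x = daisy σ' x) : σ = σ' := by
  have hmem : ∀ y, y ∈ headsList σ ↔ y ∈ headsList σ' := fun y =>
    (mem_headsList_iff_Q hτ y).trans (mem_headsList_iff_Q hτ' y).symm
  have hH : headsList σ = headsList σ' :=
    List.Perm.eq_of_pairwise'
      ((headsList_sorted σ).le_of_lt) ((headsList_sorted σ').le_of_lt)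
      ((List.perm_ext_iff_of_nodup (headsList_nodup σ) (headsList_nodup σ')).2 hmem)
  have hsucc : ∀ y : Fin n, (σ y).succ = (σ' y).succ := by
    intro y
    by_cases hy : y ∈ headsList σ
    · -- y is a head; find it from the previous head (or from 0)
      have hy' : y ∈ headsList σ' := (hmem y).1 hy
      have hlt : (headsList σ).idxOf y < (headsList σ).length := List.idxOf_lt_length_iff.2 hy
      rcases hi : (headsList σ).idxOf y with _ | j
      · -- first head
        have hhead : (headsList σ).head? = some y := by
          have h0 : 0 < (headsList σ).length := by omega
          rw [List.head?_eq_getElem?, List.getElem?_eq_some_iff]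
          refine ⟨h0, ?_⟩
          have hg := List.getElem_idxOf hlt
          simp only [hi] at hg
          exact hg
        have e1 : τ 0 = (σ y).succ := by rw [hτ, daisy_zero, hhead]; rfl
        have e2 : τ 0 = (σ' y).succ := by rw [hτ', daisy_zero, ← hH, hhead]; rfl
        rw [← e1, ← e2]
      · -- head with a predecessor
        have hj : j < (headsList σ).length := by omega
        set w := (headsList σ)[j] with hw
        have hwmem : w ∈ headsList σ := hw ▸ List.getElem_mem _
        have hwidx : (headsList σ).idxOf w = j := List.Nodup.idxOf_getElem (headsList_nodup σ) _ hj
        have hget : (headsList σ)[j + 1]? = some y := by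
          rw [List.getElem?_eq_some_iff]
          refine ⟨by omega, ?_⟩
          have hg := List.getElem_idxOf hlt
          simp only [hi] at hg
          exact hg
        have e1 : τ w.succ = (σ y).succ := by
          rw [tau_succ_mem hτ hwmem, hwidx, hget]; rfl
        have e2 : τ w.succ = (σ' y).succ := by
          rw [tau_succ_mem hτ' (by rwa [← hH]), ← hH, hwidx, hget]; rfl
        rw [← e1, ← e2]
    · have hy' : y ∉ headsList σ' := fun h => hy ((hmem y).2 h)
      rw [← tau_succ_not_mem hτ hy, ← tau_succ_not_mem hτ' hy']
  exact Equiv.ext fun y => Fin.succ_injective _ (hsucc y)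

end Daisy
namespace Daisy
section Exist

variable {n : ℕ} (τ : Equiv.Perm (Fin (n + 1)))

/-- the orbit of `0` under `τ` -/
def oo (m : ℕ) : Fin (n + 1) := (τ ^ m) 0

def ee : Fin (n + 1) → Fin (n + 1) := fun m => oo τ m.val

noncomputable def pp : Fin (n + 1) → Fin (n + 1) := Function.invFun (ee τ)

lemma oo_succ (m : ℕ) : oo τ (m + 1) = τ (oo τ m) := by
  show (τ ^ (m + 1)) 0 = _
  rw [pow_succ']; rfl

variable (htr : ∀ x y : Fin (n + 1), ∃ k : ℕ, (τ ^ k) x = y)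
include htr

lemma no_small_period (d : ℕ) (hd : 0 < d) (hdn : d ≤ n) (h : (τ ^ d) 0 = 0) : False := by
  classical
  have hsub : (Finset.univ : Finset (Fin (n + 1))) ⊆
      (Finset.range d).image (fun j => (τ ^ j) 0) := by
    intro y _
    obtain ⟨k, hk⟩ := htr 0 y
    exact Finset.mem_image.2 ⟨k % d, Finset.mem_range.2 (Nat.mod_lt _ hd),
      by rw [← pow_mod_apply τ 0 d h k]; exact hk⟩
  have hcard := Finset.card_le_card hsub
  have h1 : ((Finset.range d).image (fun j => (τ ^ j) 0)).card ≤ d := by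
    exact le_trans (Finset.card_image_le) (by simp)
  simp [Finset.card_univ] at hcard
  omega

lemma e_inj : Function.Injective (ee τ) := by
  have key : ∀ a b : Fin (n + 1), a.val ≤ b.val → ee τ a = ee τ b → a = b := by
    intro a b hab h
    rcases Nat.eq_or_lt_of_le hab with h' | h'
    · exact Fin.ext h'
    · exfalso
      have hb : b.val = a.val + (b.val - a.val) := by omega
      have hee : ee τ b = (τ ^ a.val) ((τ ^ (b.val - a.val)) 0) := by
        show (τ ^ b.val) 0 = _
        conv_lhs => rw [hb]
        rw [pow_add]; rfl
      rw [hee] at h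
      have h2 : (τ ^ a.val) ((τ ^ (b.val - a.val)) 0) = (τ ^ a.val) 0 := h.symm
      have h0 : (τ ^ (b.val - a.val)) 0 = 0 := (Equiv.injective (τ ^ a.val)) h2
      exact no_small_period τ htr (b.val - a.val) (by omega) (by omega) h0
  intro a b h
  rcases Nat.le_total a.val b.val with hab | hab
  · exact key a b hab h
  · exact (key b a hab h.symm).symm

lemma e_bij : Function.Bijective (ee τ) :=
  Finite.injective_iff_bijective.1 (e_inj τ htr)

lemma oo_pp (x : Fin (n + 1)) : oo τ (pp τ x).val = x :=
  Function.rightInverse_invFun (e_bij τ htr).2 x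

lemma pp_oo (m : ℕ) (hm : m ≤ n) : (pp τ (oo τ m)).val = m := by
  have h := Function.leftInverse_invFun (e_inj τ htr) (⟨m, by omega⟩ : Fin (n + 1))
  exact congrArg Fin.val h

lemma oo_ne_zero (m : ℕ) (h1 : 1 ≤ m) (hm : m ≤ n) : oo τ m ≠ 0 := by
  intro h
  have h0 : oo τ 0 = 0 := rfl
  have := pp_oo τ htr m hm
  rw [h, ← h0, pp_oo τ htr 0 (by omega)] at this
  omega

lemma oo_last : oo τ (n + 1) = 0 := by
  obtain ⟨j, hj⟩ := (e_bij τ htr).2 (oo τ (n + 1))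
  rcases Nat.eq_zero_or_pos j.val with h0 | h1
  · have : ee τ j = oo τ 0 := by rw [ee, h0]
    rw [this] at hj; exact hj.symm
  · exfalso
    have hj1 : j.val = (j.val - 1) + 1 := by omega
    have e1 : ee τ j = τ (oo τ (j.val - 1)) := by
      show oo τ j.val = _
      conv_lhs => rw [hj1]
      rw [oo_succ]
    have e2 : oo τ (n + 1) = τ (oo τ n) := oo_succ τ n
    rw [e1, e2] at hj
    have := τ.injective hj
    have hq := pp_oo τ htr (j.val - 1) (by omega)
    rw [this, pp_oo τ htr n le_rfl] at hq
    omega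

lemma tau_eq_zero_iff (x : Fin (n + 1)) : τ x = 0 ↔ x = oo τ n := by
  constructor
  · intro h
    have : τ x = τ (oo τ n) := by rw [h, ← oo_succ, oo_last τ htr]
    exact τ.injective this
  · intro h; rw [h, ← oo_succ, oo_last τ htr]

end Exist
end Daisy
namespace Daisy
section Exist2

variable {n : ℕ} (τ : Equiv.Perm (Fin (n + 1)))

/-- position of `y.succ` in the orbit of `0` -/
noncomputable def PP (y : Fin n) : ℕ := (pp τ y.succ).val

open scoped Classical in
def isHd (y : Fin n) : Prop := ∀ m : ℕ, PP τ y < m → m ≤ n → y.succ ≤ oo τ m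

open scoped Classical in
noncomputable def Hs : Finset (Fin n) := Finset.univ.filter (isHd τ)

noncomputable def HL : List (Fin n) := Finset.sort (Hs τ) (· ≤ ·)

lemma mem_HL {y : Fin n} : y ∈ HL τ ↔ isHd τ y := by
  classical
  simp [HL, Hs, Finset.mem_sort, Finset.mem_filter]

lemma HL_sorted : (HL τ).Pairwise (· < ·) := List.sortedLT_iff_pairwise.1 (Finset.sortedLT_sort _)

lemma HL_nodup : (HL τ).Nodup := (HL_sorted τ).nodup

lemma PP_le (y : Fin n) : PP τ y ≤ n := by
  show (pp τ y.succ).val ≤ n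
  have := (pp τ y.succ).isLt; omega

variable (htr : ∀ x y : Fin (n + 1), ∃ k : ℕ, (τ ^ k) x = y)
include htr

lemma oo_PP (y : Fin n) : oo τ (PP τ y) = y.succ := oo_pp τ htr y.succ

lemma PP_pos (y : Fin n) : 1 ≤ PP τ y := by
  by_contra h
  have h0 : PP τ y = 0 := by omega
  have := oo_PP τ htr y
  rw [h0] at this
  exact Fin.succ_ne_zero y (by rw [← this]; rfl)

lemma PP_inj {y z : Fin n} (h : PP τ y = PP τ z) : y = z := by
  have h1 := oo_PP τ htr y
  have h2 := oo_PP τ htr z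
  rw [h] at h1
  exact Fin.succ_injective _ (by rw [← h1, ← h2])

lemma tau_succ_oo (y : Fin n) : τ y.succ = oo τ (PP τ y + 1) := by
  rw [oo_succ, oo_PP τ htr]

variable (hn : 0 < n)
include hn

lemma zmax_spec : ∃ z : Fin n, isHd τ z ∧ PP τ z = n ∧ z.succ = oo τ n := by
  have hne : oo τ n ≠ 0 := oo_ne_zero τ htr n hn le_rfl
  refine ⟨(oo τ n).pred hne, ?_, ?_, Fin.succ_pred _ _⟩
  · intro m hm1 hm2
    exfalso
    have : PP τ ((oo τ n).pred hne) = n := by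
      show (pp τ ((oo τ n).pred hne).succ).val = n
      rw [Fin.succ_pred]
      exact pp_oo τ htr n le_rfl
    omega
  · show (pp τ ((oo τ n).pred hne).succ).val = n
    rw [Fin.succ_pred]
    exact pp_oo τ htr n le_rfl

lemma head_lt_of_PP_lt {y z : Fin n} (hy : isHd τ y) (h : PP τ y < PP τ z) : y < z := by
  have h1 : y.succ ≤ oo τ (PP τ z) := hy _ h (PP_le τ z)
  rw [oo_PP τ htr] at h1
  have : y ≤ z := by exact Fin.succ_le_succ_iff.1 h1
  exact lt_of_le_of_ne this (fun he => by subst he; omega)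

lemma head_PP_lt_of_lt {y z : Fin n} (hy : isHd τ y) (hz : isHd τ z) (h : y < z) :
    PP τ y < PP τ z := by
  rcases Nat.lt_trichotomy (PP τ y) (PP τ z) with h' | h' | h'
  · exact h'
  · exact absurd (PP_inj τ htr h') (ne_of_lt h)
  · exact absurd (head_lt_of_PP_lt τ htr hn hz h') (by omega)

lemma le_zmax {z w : Fin n} (hz : isHd τ z) (hPz : PP τ z = n) (hw : isHd τ w) : w ≤ z := by
  rcases Nat.lt_trichotomy (PP τ w) (PP τ z) with h' | h' | h'
  · exact le_of_lt (head_lt_of_PP_lt τ htr hn hw h')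
  · exact le_of_eq (PP_inj τ htr h')
  · exact absurd (PP_le τ w) (by omega)

end Exist2
end Daisy
namespace Daisy
section Exist3

variable {n : ℕ} (τ : Equiv.Perm (Fin (n + 1)))

open scoped Classical in
noncomputable def aa (y : Fin n) : Fin (n + 1) :=
  if isHd τ y then
    (match (HL τ).idxOf y with
     | 0 => 0
     | Nat.succ i => ((HL τ).getD i y).succ)
  else y.succ

noncomputable def ff (y : Fin n) : Fin (n + 1) := τ (aa τ y)

lemma aa_not_head {y : Fin n} (h : ¬ isHd τ y) : aa τ y = y.succ := by
  rw [aa, if_neg h]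

lemma aa_head_zero {y : Fin n} (h : isHd τ y) (hi : (HL τ).idxOf y = 0) : aa τ y = 0 := by
  rw [aa, if_pos h, hi]

lemma aa_head_succ {y : Fin n} {i : ℕ} (h : isHd τ y) (hi : (HL τ).idxOf y = i + 1) :
    aa τ y = ((HL τ).getD i y).succ := by
  rw [aa, if_pos h, hi]

lemma aa_inj : Function.Injective (aa τ) := by
  intro a b hab
  by_cases ha : isHd τ a <;> by_cases hb : isHd τ b
  · have hma : a ∈ HL τ := (mem_HL τ).2 ha
    have hmb : b ∈ HL τ := (mem_HL τ).2 hb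
    have hlta : (HL τ).idxOf a < (HL τ).length := List.idxOf_lt_length_iff.2 hma
    have hltb : (HL τ).idxOf b < (HL τ).length := List.idxOf_lt_length_iff.2 hmb
    rcases hia : (HL τ).idxOf a with _ | i <;> rcases hib : (HL τ).idxOf b with _ | j
    · have hga := List.getElem_idxOf hlta
      have hgb := List.getElem_idxOf hltb
      simp only [hia] at hga
      simp only [hib] at hgb
      rw [← hga, ← hgb]
    · rw [aa_head_zero τ ha hia, aa_head_succ τ hb hib] at hab
      exact absurd hab.symm (Fin.succ_ne_zero _)
    · rw [aa_head_succ τ ha hia, aa_head_zero τ hb hib] at hab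
      exact absurd hab (Fin.succ_ne_zero _)
    · rw [aa_head_succ τ ha hia, aa_head_succ τ hb hib] at hab
      have hi' : i < (HL τ).length := by omega
      have hj' : j < (HL τ).length := by omega
      rw [List.getD_eq_getElem _ _ hi', List.getD_eq_getElem _ _ hj'] at hab
      have he : (HL τ)[i] = (HL τ)[j] := Fin.succ_injective _ hab
      have hij : i = j := by
        have h1 := List.Nodup.idxOf_getElem (HL_nodup τ) i hi'
        have h2 := List.Nodup.idxOf_getElem (HL_nodup τ) j hj'
        rw [he] at h1; rw [h1] at h2; exact h2
      have : (HL τ).idxOf a = (HL τ).idxOf b := by omega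
      have hga := List.getElem_idxOf hlta
      have hgb := List.getElem_idxOf hltb
      rw [← hga, ← hgb]
      simp only [this]
  · exfalso
    rw [aa_not_head τ hb] at hab
    rcases hia : (HL τ).idxOf a with _ | i
    · rw [aa_head_zero τ ha hia] at hab
      exact Fin.succ_ne_zero _ hab.symm
    · rw [aa_head_succ τ ha hia] at hab
      have hlta : (HL τ).idxOf a < (HL τ).length := List.idxOf_lt_length_iff.2 ((mem_HL τ).2 ha)
      have hi' : i < (HL τ).length := by omega
      rw [List.getD_eq_getElem _ _ hi'] at hab
      have : (HL τ)[i] = b := Fin.succ_injective _ hab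
      exact hb ((mem_HL τ).1 (this ▸ List.getElem_mem _))
  · exfalso
    rw [aa_not_head τ ha] at hab
    rcases hib : (HL τ).idxOf b with _ | j
    · rw [aa_head_zero τ hb hib] at hab
      exact Fin.succ_ne_zero _ hab
    · rw [aa_head_succ τ hb hib] at hab
      have hltb : (HL τ).idxOf b < (HL τ).length := List.idxOf_lt_length_iff.2 ((mem_HL τ).2 hb)
      have hj' : j < (HL τ).length := by omega
      rw [List.getD_eq_getElem _ _ hj'] at hab
      have : a = (HL τ)[j] := Fin.succ_injective _ hab
      exact ha ((mem_HL τ).1 (this ▸ List.getElem_mem _))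
  · rw [aa_not_head τ ha, aa_not_head τ hb] at hab
    exact Fin.succ_injective _ hab

variable (htr : ∀ x y : Fin (n + 1), ∃ k : ℕ, (τ ^ k) x = y) (hn : 0 < n)
include htr hn

lemma ff_ne_zero (y : Fin n) : ff τ y ≠ 0 := by
  intro h
  obtain ⟨z, hz, hPz, hzs⟩ := zmax_spec τ htr hn
  have haz : aa τ y = oo τ n := (tau_eq_zero_iff τ htr _).1 h
  rw [← hzs] at haz
  by_cases hy : isHd τ y
  · have hlt : (HL τ).idxOf y < (HL τ).length := List.idxOf_lt_length_iff.2 ((mem_HL τ).2 hy)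
    rcases hi : (HL τ).idxOf y with _ | i
    · rw [aa_head_zero τ hy hi] at haz
      exact Fin.succ_ne_zero _ haz.symm
    · rw [aa_head_succ τ hy hi] at haz
      have hi' : i < (HL τ).length := by omega
      rw [List.getD_eq_getElem _ _ hi'] at haz
      have hwz : (HL τ)[i] = z := Fin.succ_injective _ haz
      -- but HL[i] < HL[i+1] = y ≤ z, contradiction
      have hyz : y ≤ z := le_zmax τ htr hn hz hPz hy
      have hgy := List.getElem_idxOf hlt
      simp only [hi] at hgy
      have : (HL τ)[i] < (HL τ)[i + 1] := by
        have := (HL_sorted τ).get_strictMono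
          (show (⟨i, hi'⟩ : Fin _) < ⟨i + 1, by omega⟩ from by simp)
        simpa [List.get_eq_getElem] using this
      rw [hwz, hgy] at this
      exact absurd (lt_of_le_of_lt hyz this) (lt_irrefl y)
  · rw [aa_not_head τ hy] at haz
    have : y = z := Fin.succ_injective _ haz
    exact hy (this ▸ hz)

end Exist3
end Daisy
namespace Daisy
section Exist4

variable {n : ℕ} (τ : Equiv.Perm (Fin (n + 1)))
variable (htr : ∀ x y : Fin (n + 1), ∃ k : ℕ, (τ ^ k) x = y) (hn : 0 < n)

open scoped Classical in
noncomputable def bp (y : Fin n) : ℕ :=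
  Nat.findGreatest (fun q => q < PP τ y ∧ ∃ w, isHd τ w ∧ PP τ w = q) n

open scoped Classical in
lemma bp_pos_spec {y : Fin n} (h : bp τ y ≠ 0) :
    bp τ y < PP τ y ∧ ∃ w, isHd τ w ∧ PP τ w = bp τ y :=
  Nat.findGreatest_of_ne_zero rfl h

open scoped Classical in
lemma le_bp {y : Fin n} {q : ℕ} (hq : q ≤ n) (h1 : q < PP τ y)
    (h2 : ∃ w, isHd τ w ∧ PP τ w = q) : q ≤ bp τ y :=
  Nat.le_findGreatest hq ⟨h1, h2⟩

open scoped Classical in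
lemma bp_le (y : Fin n) : bp τ y ≤ n := Nat.findGreatest_le n

include htr hn

noncomputable def sg : Equiv.Perm (Fin n) :=
  Equiv.ofBijective (fun y => (ff τ y).pred (ff_ne_zero τ htr hn y))
    (Finite.injective_iff_bijective.1 (by
      intro a b h
      have h' : (ff τ a).pred (ff_ne_zero τ htr hn a)
          = (ff τ b).pred (ff_ne_zero τ htr hn b) := h
      have hab : ff τ a = ff τ b := by
        rw [← Fin.succ_pred (ff τ a) (ff_ne_zero τ htr hn a), h',
          Fin.succ_pred (ff τ b) (ff_ne_zero τ htr hn b)]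
      exact aa_inj τ (τ.injective hab)))

lemma sg_succ (y : Fin n) : ((sg τ htr hn) y).succ = ff τ y :=
  Fin.succ_pred (ff τ y) (ff_ne_zero τ htr hn y)

lemma PP_ne_n_of_not_head {y : Fin n} (h : ¬ isHd τ y) : PP τ y ≠ n := by
  intro hPy
  obtain ⟨z, hz, hPz, hzs⟩ := zmax_spec τ htr hn
  exact h ((PP_inj τ htr (hPy.trans hPz.symm)) ▸ hz)

lemma sg_pos_not_head {y : Fin n} (h : ¬ isHd τ y) :
    PP τ (sg τ htr hn y) = PP τ y + 1 := by
  have h1 : ((sg τ htr hn) y).succ = oo τ (PP τ y + 1) := by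
    rw [sg_succ, ff, aa_not_head τ h, tau_succ_oo τ htr]
  have h2 : PP τ y + 1 ≤ n := by
    have := PP_le τ y
    have := PP_ne_n_of_not_head τ htr hn h
    omega
  show (pp τ ((sg τ htr hn) y).succ).val = _
  rw [h1]
  exact pp_oo τ htr _ h2

lemma bp_lt (y : Fin n) : bp τ y < PP τ y := by
  rcases Nat.eq_zero_or_pos (bp τ y) with h0 | h1
  · have := PP_pos τ htr y; omega
  · exact (bp_pos_spec τ (y := y) (by omega)).1

lemma sg_pos_head {y : Fin n} (h : isHd τ y) :
    PP τ (sg τ htr hn y) = bp τ y + 1 := by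
  have hmem : y ∈ HL τ := (mem_HL τ).2 h
  have hlt : (HL τ).idxOf y < (HL τ).length := List.idxOf_lt_length_iff.2 hmem
  rcases hi : (HL τ).idxOf y with _ | i
  · -- first head: bp y = 0
    have hgy := List.getElem_idxOf hlt
    simp only [hi] at hgy
    have hbp : bp τ y = 0 := by
      rcases Nat.eq_zero_or_pos (bp τ y) with h0 | h1
      · exact h0
      · exfalso
        obtain ⟨hblt, w, hw, hPw⟩ := bp_pos_spec τ (y := y) (by omega)
        have hwy : w < y := head_lt_of_PP_lt τ htr hn hw (by omega)
        have hmw : w ∈ HL τ := (mem_HL τ).2 hw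
        have hltw : (HL τ).idxOf w < (HL τ).length := List.idxOf_lt_length_iff.2 hmw
        have hgw := List.getElem_idxOf hltw
        have hmono : (HL τ)[0] ≤ (HL τ)[(HL τ).idxOf w] := by
          have := (HL_sorted τ).get_strictMono.monotone
            (show (⟨0, by omega⟩ : Fin _) ≤ ⟨(HL τ).idxOf w, hltw⟩ from by simp)
          simpa [List.get_eq_getElem] using this
        rw [hgy, hgw] at hmono
        exact absurd (lt_of_lt_of_le hwy hmono) (lt_irrefl w)
    have h1 : ((sg τ htr hn) y).succ = oo τ 1 := by
      rw [sg_succ, ff, aa_head_zero τ h hi]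
      rw [show (0 : Fin (n + 1)) = oo τ 0 from rfl, ← oo_succ]
    rw [hbp]
    show (pp τ ((sg τ htr hn) y).succ).val = _
    rw [h1]
    exact pp_oo τ htr _ (by omega)
  · have hi' : i < (HL τ).length := by omega
    have hmu : (HL τ)[i] ∈ HL τ := List.getElem_mem _
    have hwu : isHd τ (HL τ)[i] := (mem_HL τ).1 hmu
    have hgy := List.getElem_idxOf hlt
    simp only [hi] at hgy
    have huy : (HL τ)[i] < y := by
      have := (HL_sorted τ).get_strictMono
        (show (⟨i, hi'⟩ : Fin _) < ⟨i + 1, by omega⟩ from by simp)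
      simpa [List.get_eq_getElem, hgy] using this
    have hPu : PP τ (HL τ)[i] < PP τ y := head_PP_lt_of_lt τ htr hn hwu h huy
    have hbp : bp τ y = PP τ (HL τ)[i] := by
      have hle : PP τ (HL τ)[i] ≤ bp τ y :=
        le_bp τ (PP_le τ _) hPu ⟨_, hwu, rfl⟩
      rcases Nat.eq_or_lt_of_le hle with he | hgt
      · exact he.symm
      · exfalso
        obtain ⟨hblt, v, hv, hPv⟩ := bp_pos_spec τ (y := y) (by omega)
        have huv : (HL τ)[i] < v := head_lt_of_PP_lt τ htr hn hwu (by omega)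
        have hvy : v < y := head_lt_of_PP_lt τ htr hn hv (by omega)
        have hmv : v ∈ HL τ := (mem_HL τ).2 hv
        have hltv : (HL τ).idxOf v < (HL τ).length := List.idxOf_lt_length_iff.2 hmv
        have hgv := List.getElem_idxOf hltv
        have h1 : i < (HL τ).idxOf v := by
          have hiff := (HL_sorted τ).get_strictMono.lt_iff_lt
            (a := ⟨i, hi'⟩) (b := ⟨(HL τ).idxOf v, hltv⟩)
          simp only [List.get_eq_getElem, hgv] at hiff
          have h3 := hiff.1 huv
          simpa using h3
        have h2 : (HL τ).idxOf v < i + 1 := by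
          have hiff := (HL_sorted τ).get_strictMono.lt_iff_lt
            (a := ⟨(HL τ).idxOf v, hltv⟩) (b := ⟨i + 1, by omega⟩)
          simp only [List.get_eq_getElem, hgv, hgy] at hiff
          have h3 := hiff.1 hvy
          simpa using h3
        omega
    have h1 : ((sg τ htr hn) y).succ = oo τ (PP τ (HL τ)[i] + 1) := by
      rw [sg_succ, ff, aa_head_succ τ h hi, List.getD_eq_getElem _ _ hi',
        tau_succ_oo τ htr]
    rw [hbp]
    show (pp τ ((sg τ htr hn) y).succ).val = _
    rw [h1]
    refine pp_oo τ htr _ ?_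
    have := PP_le τ y
    omega

lemma head_eq_of_inBlock {y z : Fin n} (hy : isHd τ y) (hz : isHd τ z)
    (h1 : bp τ y < PP τ z) (h2 : PP τ z ≤ PP τ y) : z = y := by
  rcases Nat.eq_or_lt_of_le h2 with he | hlt
  · exact PP_inj τ htr he
  · exfalso
    have : PP τ z ≤ bp τ y := le_bp τ (PP_le τ z) hlt ⟨z, hz, rfl⟩
    omega

lemma inBlock_step {y : Fin n} (hy : isHd τ y) (z : Fin n)
    (h1 : bp τ y < PP τ z) (h2 : PP τ z ≤ PP τ y) :
    bp τ y < PP τ (sg τ htr hn z) ∧ PP τ (sg τ htr hn z) ≤ PP τ y := by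
  by_cases hz : isHd τ z
  · have hzy : z = y := head_eq_of_inBlock τ htr hn hy hz h1 h2
    subst hzy
    rw [sg_pos_head τ htr hn hz]
    have := bp_lt τ htr hn z
    omega
  · rw [sg_pos_not_head τ htr hn hz]
    have hne : PP τ z ≠ PP τ y := fun he => hz ((PP_inj τ htr he) ▸ hy)
    omega

lemma block_min {y : Fin n} (hy : isHd τ y) :
    ∀ (k : ℕ) (z : Fin n), z.val < k → bp τ y < PP τ z → PP τ z ≤ PP τ y → y ≤ z := by
  intro k
  induction k with
  | zero => intro z hk; omega
  | succ k ih =>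
    intro z hk h1 h2
    by_contra hlt'
    have hlt : z < y := not_le.1 hlt'
    have hz : isHd τ z := by
      intro m hm1 hm2
      rcases le_or_gt m (PP τ y) with hmy | hmy
      · have hm0 : 1 ≤ m := by have := PP_pos τ htr z; omega
        have hne : oo τ m ≠ 0 := oo_ne_zero τ htr m hm0 hm2
        have hws : ((oo τ m).pred hne).succ = oo τ m := Fin.succ_pred _ _
        have hPw : PP τ ((oo τ m).pred hne) = m := by
          show (pp τ ((oo τ m).pred hne).succ).val = m
          rw [hws]
          exact pp_oo τ htr m hm2
        rcases le_or_gt z ((oo τ m).pred hne) with hzw | hwz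
        · rw [← hws]
          exact Fin.succ_le_succ_iff.2 hzw
        · exfalso
          have hyw : y ≤ (oo τ m).pred hne := by
            refine ih _ ?_ (by omega) (by omega)
            have hv : ((oo τ m).pred hne).val < z.val := hwz
            omega
          have : ((oo τ m).pred hne) < y := lt_of_lt_of_le hwz (le_of_lt hlt)
          omega
      · have := hy m hmy hm2
        have hzy : z.succ ≤ y.succ := Fin.succ_le_succ_iff.2 (le_of_lt hlt)
        exact le_trans hzy this
    have := head_eq_of_inBlock τ htr hn hy hz h1 h2
    subst this
    exact absurd hlt (lt_irrefl z)

lemma head_min_orbit {y : Fin n} (hy : isHd τ y) (k : ℕ) :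
    y ≤ ((sg τ htr hn) ^ k) y := by
  have hb : ∀ k, bp τ y < PP τ (((sg τ htr hn) ^ k) y) ∧
      PP τ (((sg τ htr hn) ^ k) y) ≤ PP τ y := by
    intro k
    induction k with
    | zero =>
      have h0 : ((sg τ htr hn) ^ 0) y = y := by simp
      rw [h0]
      exact ⟨bp_lt τ htr hn y, le_rfl⟩
    | succ k ih =>
      have hstep : ((sg τ htr hn) ^ (k + 1)) y = (sg τ htr hn) (((sg τ htr hn) ^ k) y) := by
        rw [pow_succ']; rfl
      rw [hstep]
      exact inBlock_step τ htr hn hy _ ih.1 ih.2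
  exact block_min τ htr hn hy ((((sg τ htr hn) ^ k) y).val + 1) _ (Nat.lt_succ_self _)
    (hb k).1 (hb k).2

lemma not_head_not_min {y : Fin n} (hy : ¬ isHd τ y) :
    ∃ k, ((sg τ htr hn) ^ k) y < y := by
  classical
  obtain ⟨z, hz, hPz, hzs⟩ := zmax_spec τ htr hn
  have hex : ∃ m, PP τ y ≤ m ∧ m ≤ n ∧ ∃ w, isHd τ w ∧ PP τ w = m :=
    ⟨n, PP_le τ y, le_rfl, z, hz, hPz⟩
  obtain ⟨hm1, hm2, c, hc, hPc⟩ := Nat.find_spec hex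
  have hwalk : ∀ j, j ≤ Nat.find hex - PP τ y →
      PP τ (((sg τ htr hn) ^ j) y) = PP τ y + j := by
    intro j
    induction j with
    | zero => intro _; simp
    | succ j ih =>
      intro hj
      have hprev := ih (by omega)
      have hnh : ¬ isHd τ (((sg τ htr hn) ^ j) y) := by
        intro hhd
        exact Nat.find_min hex (show PP τ y + j < Nat.find hex by omega)
          ⟨by omega, by omega, _, hhd, hprev⟩
      have hstep : ((sg τ htr hn) ^ (j + 1)) y = (sg τ htr hn) (((sg τ htr hn) ^ j) y) := by
        rw [pow_succ']; rfl
      rw [hstep, sg_pos_not_head τ htr hn hnh, hprev]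
      omega
  have hk := hwalk (Nat.find hex - PP τ y) le_rfl
  have hPk : PP τ (((sg τ htr hn) ^ (Nat.find hex - PP τ y)) y) = PP τ c := by
    rw [hk, hPc]; omega
  have hck : ((sg τ htr hn) ^ (Nat.find hex - PP τ y)) y = c := PP_inj τ htr hPk
  have hbpc : bp τ c < PP τ y := by
    by_contra hge
    have hge' : PP τ y ≤ bp τ c := by omega
    have hbpne : bp τ c ≠ 0 := by have := PP_pos τ htr y; omega
    obtain ⟨hblt, v, hv, hPv⟩ := bp_pos_spec τ hbpne
    exact Nat.find_min hex (show bp τ c < Nat.find hex by omega)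
      ⟨hge', bp_le τ c, v, hv, hPv⟩
  have hcy : c ≤ y := block_min τ htr hn hc (y.val + 1) y (Nat.lt_succ_self _)
    hbpc (by omega)
  have hcne : c ≠ y := fun he => hy (he ▸ hc)
  exact ⟨Nat.find hex - PP τ y, by rw [hck]; exact lt_of_le_of_ne hcy hcne⟩

lemma headsList_sg : headsList (sg τ htr hn) = HL τ := by
  have hmm : ∀ y, y ∈ headsList (sg τ htr hn) ↔ y ∈ HL τ := by
    intro y
    rw [mem_headsList, mem_HL]
    constructor
    · intro hall
      by_contra hhd
      obtain ⟨k, hk⟩ := not_head_not_min τ htr hn hhd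
      exact absurd (hall k) (not_le.2 hk)
    · intro hhd k
      exact head_min_orbit τ htr hn hhd k
  exact List.Perm.eq_of_pairwise'
    ((headsList_sorted _).le_of_lt) ((HL_sorted τ).le_of_lt)
    ((List.perm_ext_iff_of_nodup (headsList_nodup _) (HL_nodup τ)).2 hmm)

end Exist4
end Daisy
namespace Daisy
section Exist5

variable {n : ℕ} (τ : Equiv.Perm (Fin (n + 1)))
variable (htr : ∀ x y : Fin (n + 1), ∃ k : ℕ, (τ ^ k) x = y) (hn : 0 < n)
include htr hn

lemma daisy_sg : ∀ x : Fin (n + 1), τ x = daisy (sg τ htr hn) x := by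
  intro x
  induction x using Fin.cases with
  | zero =>
    rw [daisy_zero, headsList_sg τ htr hn]
    obtain ⟨z, hz, hPz, hzs⟩ := zmax_spec τ htr hn
    have hne : HL τ ≠ [] := List.ne_nil_of_mem ((mem_HL τ).2 hz)
    have hlen : 0 < (HL τ).length := List.length_pos_iff.2 hne
    have hhead : (HL τ).head? = some (HL τ)[0] := by
      rw [List.head?_eq_getElem?]
      exact List.getElem?_eq_some_iff.2 ⟨hlen, rfl⟩
    rw [hhead]
    show τ 0 = ((sg τ htr hn) (HL τ)[0]).succ
    rw [sg_succ, ff, aa_head_zero τ ((mem_HL τ).1 (List.getElem_mem _))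
      (List.Nodup.idxOf_getElem (HL_nodup τ) 0 hlen)]
  | succ y =>
    rw [daisy_succ, headsList_sg τ htr hn]
    by_cases hy : y ∈ HL τ
    · rw [if_pos hy, head?_drop]
      have hlt : (HL τ).idxOf y < (HL τ).length := List.idxOf_lt_length_iff.2 hy
      rcases lt_or_ge ((HL τ).idxOf y + 1) (HL τ).length with hl | hl
      · have hsome : (HL τ)[(HL τ).idxOf y + 1]? = some (HL τ)[(HL τ).idxOf y + 1] :=
          List.getElem?_eq_some_iff.2 ⟨hl, rfl⟩
        rw [hsome]
        show τ y.succ = ((sg τ htr hn) (HL τ)[(HL τ).idxOf y + 1]).succ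
        have hc'mem : isHd τ (HL τ)[(HL τ).idxOf y + 1] := (mem_HL τ).1 (List.getElem_mem _)
        have hidx : (HL τ).idxOf ((HL τ)[(HL τ).idxOf y + 1]) = (HL τ).idxOf y + 1 :=
          List.Nodup.idxOf_getElem (HL_nodup τ) _ hl
        rw [sg_succ, ff, aa_head_succ τ hc'mem hidx, List.getD_eq_getElem _ _ hlt,
          List.getElem_idxOf hlt]
      · have hnone : (HL τ)[(HL τ).idxOf y + 1]? = none := List.getElem?_eq_none hl
        rw [hnone]
        show τ y.succ = 0
        obtain ⟨z, hz, hPz, hzs⟩ := zmax_spec τ htr hn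
        have hmz : z ∈ HL τ := (mem_HL τ).2 hz
        have hzy : y ≤ z := le_zmax τ htr hn hz hPz ((mem_HL τ).1 hy)
        have hltz : (HL τ).idxOf z < (HL τ).length := List.idxOf_lt_length_iff.2 hmz
        have hzy' : z ≤ y := by
          have hmono := (HL_sorted τ).get_strictMono.monotone
            (show (⟨(HL τ).idxOf z, hltz⟩ : Fin _) ≤ ⟨(HL τ).idxOf y, hlt⟩ from by
              simp only [Fin.mk_le_mk]; omega)
          simp only [List.get_eq_getElem, List.getElem_idxOf] at hmono
          exact hmono
        have hyz : y = z := le_antisymm hzy hzy'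
        have hsy : y.succ = oo τ n := by rw [hyz, hzs]
        rw [hsy, ← oo_succ, oo_last τ htr]
    · rw [if_neg hy]
      show τ y.succ = ((sg τ htr hn) y).succ
      rw [sg_succ, ff, aa_not_head τ (fun h => hy ((mem_HL τ).2 h))]

end Exist5
end Daisy

/-- Daisy chaining is a bijection between permutations of `{1,…,n}` and single-cycle
permutations of `{1,…,n+1}` (permutations whose powers act transitively). -/
theorem daisy_bijection (n : ℕ) (τ : Equiv.Perm (Fin (n + 1))) :
    (∀ x y : Fin (n + 1), ∃ k : ℕ, (τ ^ k) x = y) ↔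
      ∃! σ : Equiv.Perm (Fin n), ∀ x : Fin (n + 1), τ x = daisy σ x := by
  constructor
  · intro htr
    rcases Nat.eq_zero_or_pos n with hn0 | hn
    · subst hn0
      refine ⟨1, fun x => ?_, fun σ' _ => Equiv.ext fun y => y.elim0⟩
      have h1 : ∀ a : Fin (0 + 1), a = 0 := fun a => by omega
      rw [h1 (τ x), h1 (daisy 1 x)]
    · exact ⟨Daisy.sg τ htr hn, Daisy.daisy_sg τ htr hn,
        fun σ' h' => Daisy.daisy_injective h' (Daisy.daisy_sg τ htr hn)⟩
  · rintro ⟨σ, hσ, -⟩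
    exact fun x y => Daisy.tau_transitive hσ x y
end

section
/- Entry/exit lemma, first part: if S is a non-singlet family, x ∈ S is in an exit position, and S' denotes the family S with x removed, then the regular insertion of x into S' gives back S. -/
/-- A (non-singlet) sequence family: a list `(a₁,…,a_k,b_l,…,b₁)` of integers with
`k, l ≥ 1` and `b₁ < … < b_l < a₁ < … < a_k`; the `aᵢ` (the increasing prefix) are the
reds (ascent values) and the `bⱼ` (the decreasing suffix) are the blues (descent values). -/
def IsFamilySeq (l : List ℤ) : Prop :=
  ∃ a d : List ℤ, l = a ++ d ∧ a ≠ [] ∧ d ≠ [] ∧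
    a.Chain' (· < ·) ∧ d.Chain' (· > ·) ∧ ∀ u ∈ d, ∀ v ∈ a, u < v

/-- Insert `m` immediately before (the unique occurrence of) `x` in `l`. -/
def insertBefore (l : List ℤ) (x m : ℤ) : List ℤ :=
  l.takeWhile (· != x) ++ m :: l.dropWhile (· != x)

/-- `x` is in an exit position of the family `l`: inserting any `m` larger than all
elements of `l` immediately before `x` does not yield a family. -/
def ExitPos (l : List ℤ) (x : ℤ) : Prop :=
  x ∈ l ∧ ∀ m : ℤ, (∀ y ∈ l, y < m) → ¬ IsFamilySeq (insertBefore l x m)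

/-- `l'` is the regular insertion of `x` into the family `l = a ++ d` (reds `a`, blues `d`,
highest blue `b_l = max d`): if `x > b_l` then `x` is inserted, colored red, at its order
position among the reds, and if `x < b_l` then `x` is inserted, colored blue, at its order
position among the blues. -/
def RegInsert (l : List ℤ) (x : ℤ) (l' : List ℤ) : Prop :=
  ∃ a d : List ℤ, l = a ++ d ∧ a ≠ [] ∧ d ≠ [] ∧
    a.Chain' (· < ·) ∧ d.Chain' (· > ·) ∧ (∀ u ∈ d, ∀ v ∈ a, u < v) ∧
    (((∀ u ∈ d, u < x) ∧ l' = List.orderedInsert (· ≤ ·) x a ++ d) ∨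
     ((∃ u ∈ d, x < u) ∧ l' = a ++ List.orderedInsert (fun p q => q ≤ p) x d))

-- auxiliary lemmas

private lemma exists_bigger (l : List ℤ) : ∃ m : ℤ, ∀ y ∈ l, y < m := by
  induction l with
  | nil => exact ⟨0, by simp⟩
  | cons a t ih =>
    obtain ⟨m, hm⟩ := ih
    refine ⟨max (a + 1) m, ?_⟩
    intro y hy
    rcases List.mem_cons.1 hy with rfl | hy
    · exact lt_max_of_lt_left (by omega)
    · exact lt_max_of_lt_right (hm y hy)

private lemma takeWhile_append_all {p : ℤ → Bool} {a : List ℤ} (d : List ℤ)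
    (h : ∀ y ∈ a, p y = true) :
    (a ++ d).takeWhile p = a ++ d.takeWhile p := by
  induction a with
  | nil => simp
  | cons y t ih =>
    simp only [List.cons_append, List.takeWhile_cons, h y (by simp)]
    simp [ih fun z hz => h z (by simp [hz])]

private lemma dropWhile_append_all {p : ℤ → Bool} {a : List ℤ} (d : List ℤ)
    (h : ∀ y ∈ a, p y = true) :
    (a ++ d).dropWhile p = d.dropWhile p := by
  induction a with
  | nil => simp
  | cons y t ih =>
    simp only [List.cons_append, List.dropWhile_cons, h y (by simp)]
    simp [ih fun z hz => h z (by simp [hz])]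

private lemma oi_le (a : List ℤ) (x : ℤ) (h : a.Pairwise (· < ·)) (hx : x ∈ a) :
    List.orderedInsert (· ≤ ·) x (a.erase x) = a := by
  induction a with
  | nil => simp at hx
  | cons y t ih =>
    by_cases hxy : y = x
    · subst hxy
      rw [List.erase_cons_head]
      cases t with
      | nil => simp [List.orderedInsert]
      | cons b t' =>
        have hyb : y < b := (List.pairwise_cons.1 h).1 b (by simp)
        simp [List.orderedInsert, hyb.le]
    · have hxt : x ∈ t := by
        rcases List.mem_cons.1 hx with h' | h'
        · exact absurd h'.symm hxy
        · exact h'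
      have hyx : y < x := (List.pairwise_cons.1 h).1 x hxt
      rw [List.erase_cons_tail (by simpa using fun h' : y = x => hxy h')]
      have : ¬ (x ≤ y) := not_le.2 hyx
      simp [List.orderedInsert, this, ih (List.pairwise_cons.1 h).2 hxt]

private lemma oi_ge (d : List ℤ) (x : ℤ) (h : d.Pairwise (· > ·)) (hx : x ∈ d) :
    List.orderedInsert (fun p q => q ≤ p) x (d.erase x) = d := by
  induction d with
  | nil => simp at hx
  | cons y t ih =>
    by_cases hxy : y = x
    · subst hxy
      rw [List.erase_cons_head]
      cases t with
      | nil => simp [List.orderedInsert]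
      | cons b t' =>
        have hyb : b < y := (List.pairwise_cons.1 h).1 b (by simp)
        simp [List.orderedInsert, hyb.le]
    · have hxt : x ∈ t := by
        rcases List.mem_cons.1 hx with h' | h'
        · exact absurd h'.symm hxy
        · exact h'
      have hyx : x < y := (List.pairwise_cons.1 h).1 x hxt
      rw [List.erase_cons_tail (by simpa using fun h' : y = x => hxy h')]
      have : ¬ (y ≤ x) := not_le.2 hyx
      simp [List.orderedInsert, this, ih (List.pairwise_cons.1 h).2 hxt]

/-- Entry/exit lemma, first part: if `S` is a non-singlet family, `x ∈ S` is in an exit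
position, and `S'` is `S` with `x` removed, then the regular insertion of `x` into `S'`
gives back `S`. -/
theorem entry_exit_first (l : List ℤ) (x : ℤ)
    (hfam : IsFamilySeq l) (hexit : ExitPos l x) :
    RegInsert (l.erase x) x l := by
  obtain ⟨a, d, hl, ha, hd, hca, hcd, hcross⟩ := hfam
  obtain ⟨hxl, hins⟩ := hexit
  have hpa : a.Pairwise (· < ·) := List.isChain_iff_pairwise.1 hca
  have hpd : d.Pairwise (· > ·) := List.isChain_iff_pairwise.1 hcd
  obtain ⟨m, hm⟩ := exists_bigger l
  have hm' : ∀ y ∈ l, y < m := hm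
  subst hl
  rcases List.mem_append.1 hxl with hxa | hxd
  · -- x is a red
    have hdx : ∀ u ∈ d, u < x := fun u hu => hcross u hu x hxa
    have hxnd : x ∉ d := fun h => lt_irrefl x (hdx x h)
    -- a is not a singleton
    have hane : a ≠ [x] := by
      intro h
      subst h
      apply hins m hm'
      have htk : ((x :: d).takeWhile (· != x)) = [] := by
        simp [List.takeWhile_cons]
      have hdr : ((x :: d).dropWhile (· != x)) = x :: d := by
        simp [List.dropWhile_cons]
      refine ⟨[m], x :: d, ?_, by simp, by simp, List.isChain_singleton _, ?_, ?_⟩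
      · simp [insertBefore, htk, hdr]
      · refine List.isChain_iff_pairwise.2 ?_; rw [List.pairwise_cons]
        exact ⟨fun u hu => hcross u hu x (by simp), hpd⟩
      · intro u hu v hv
        simp at hv; subst hv
        exact hm u (by simpa using hu)
    have haerase : a.erase x ≠ [] := by
      intro h
      have hsub : a.Sublist [x] := by
        have := List.erase_sublist (a := x) (l := a)
        rw [h] at this
        -- a.erase x = [] means a has length ≤ 1
        cases a with
        | nil => simp at hxa
        | cons y t =>
          cases t with
          | nil =>
            simp at hxa
            subst hxa
            simp
          | cons z t' =>
            exfalso
            by_cases hyx : y = x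
            · subst hyx
              rw [List.erase_cons_head] at h
              simp at h
            · rw [List.erase_cons_tail (by simpa using fun h' : y = x => hyx h')] at h
              simp at h
      have := List.Sublist.eq_of_length hsub ?_
      · exact hane this
      · cases a with
        | nil => simp at hxa
        | cons y t =>
          have : t = [] := by
            rcases List.sublist_cons_iff.1 hsub with h1 | h1 <;>
              simp_all [List.sublist_nil]
          subst this
          rfl
    refine ⟨a.erase x, d, ?_, haerase, hd, ?_, hcd, ?_, Or.inl ⟨hdx, ?_⟩⟩
    · rw [List.erase_append_left _ hxa]
    · exact List.isChain_iff_pairwise.2 (hpa.sublist (List.erase_sublist (a := x) (l := a)))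
    · intro u hu v hv
      exact hcross u hu v (List.mem_of_mem_erase hv)
    · rw [oi_le a x hpa hxa]
  · -- x is a blue
    have hxna : x ∉ a := fun h => lt_irrefl x (hcross x hxd x h)
    have hbne : ∀ y ∈ a, (y != x) = true := by
      intro y hy
      simp only [bne_iff_ne, ne_eq]
      exact fun h => hxna (h ▸ hy)
    obtain ⟨b, t, rfl⟩ : ∃ b t, d = b :: t := by
      cases d with
      | nil => simp at hxd
      | cons b t => exact ⟨b, t, rfl⟩
    -- x is not the highest blue b
    have hxb : x ≠ b := by
      intro h
      subst h
      apply hins m hm'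
      have htk : ((a ++ x :: t).takeWhile (· != x)) = a := by
        rw [takeWhile_append_all _ hbne]
        simp [List.takeWhile_cons]
      have hdr : ((a ++ x :: t).dropWhile (· != x)) = x :: t := by
        rw [dropWhile_append_all _ hbne]
        simp [List.dropWhile_cons]
      refine ⟨a ++ [m], x :: t, ?_, by simp [ha], by simp, ?_, hcd, ?_⟩
      · simp [insertBefore, htk, hdr]
      · refine List.isChain_iff_pairwise.2 ?_
        rw [List.pairwise_append]
        refine ⟨hpa, by simp, ?_⟩
        intro u hu v hv
        simp at hv; subst hv
        exact hm u (by simp [hu])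
      · intro u hu v hv
        rcases List.mem_append.1 hv with hv | hv
        · exact hcross u (by simpa using hu) v hv
        · simp at hv; subst hv
          exact hm u (by simp; right; simpa using hu)
    have hxt : x ∈ t := by
      rcases List.mem_cons.1 hxd with h | h
      · exact absurd h hxb
      · exact h
    have hxlb : x < b := (List.pairwise_cons.1 hpd).1 x hxt
    have herased : (b :: t).erase x = b :: t.erase x := by
      rw [List.erase_cons_tail (by simpa using fun h : b = x => hxb h.symm)]
    refine ⟨a, (b :: t).erase x, ?_, ha, by rw [herased]; simp, hca, ?_, ?_,
      Or.inr ⟨⟨b, by rw [herased]; simp, hxlb⟩, ?_⟩⟩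
    · rw [List.erase_append_right _ hxna]
    · exact List.isChain_iff_pairwise.2 (hpd.sublist (List.erase_sublist (a := x)))
    · intro u hu v hv
      exact hcross u (List.mem_of_mem_erase hu) v hv
    · rw [oi_ge (b :: t) x hpd hxd]
end

section
/- Entry/exit lemma, second part: if S is a non-singlet family and x ∉ S is inserted regularly into S to obtain a family S', then x is in an exit position in S'. -/
open List

/-- If a list splits in two ways around a unique element `m`, the splits agree. -/
lemma unique_sep {m : ℤ} : ∀ (s p t q : List ℤ), s ++ m :: t = p ++ m :: q →
    m ∉ s → m ∉ p → s = p ∧ t = q := by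
  intro s
  induction s with
  | nil =>
    intro p t q h hs hp
    cases p with
    | nil => simpa using h
    | cons b p' =>
      simp only [nil_append, cons_append, cons.injEq] at h
      exact (hp (by rw [h.1]; exact mem_cons_self (a := b) (l := p'))).elim
  | cons b s' ih =>
    intro p t q h hs hp
    cases p with
    | nil =>
      simp only [cons_append, nil_append, cons.injEq] at h
      exact (hs (by rw [h.1]; exact mem_cons_self (a := m) (l := s'))).elim
    | cons c p' =>
      simp only [cons_append, cons.injEq] at h
      have hs' : m ∉ s' := fun hm => hs (mem_cons_of_mem _ hm)
      have hp' : m ∉ p' := fun hm => hp (mem_cons_of_mem _ hm)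
      obtain ⟨h1, h2⟩ := ih p' t q h.2 hs' hp'
      exact ⟨by rw [h.1, h1], h2⟩

/-- Key structural lemma: if `p ++ m :: q` is a family and `m` dominates everything
else, then the split into reds/blues is exactly `(p ++ [m], q)`. -/
lemma key_split {p q : List ℤ} {m : ℤ}
    (hlt : ∀ y ∈ p ++ q, y < m)
    (hfam : IsFamilySeq (p ++ m :: q)) :
    (p ++ [m]).Chain' (· < ·) ∧ q.Chain' (· > ·) ∧ ∀ u ∈ q, ∀ v ∈ p, u < v := by
  obtain ⟨A, D, hEq, hA, hD, hAc, hDc, hAD⟩ := hfam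
  have hsmall : ∀ y ∈ p ++ m :: q, y = m ∨ y < m := by
    intro y hy
    rcases mem_append.mp hy with hy | hy
    · exact Or.inr (hlt y (mem_append_left _ hy))
    · rcases mem_cons.mp hy with rfl | hy
      · exact Or.inl rfl
      · exact Or.inr (hlt y (mem_append_right _ hy))
  have hmA : m ∈ A := by
    have hm : m ∈ A ++ D := by rw [← hEq]; exact mem_append_right _ (mem_cons_self)
    rcases mem_append.mp hm with h | h
    · exact h
    · obtain ⟨v, hv⟩ := exists_mem_of_ne_nil A hA
      have hmv := hAD m h v hv
      have hv' : v ∈ p ++ m :: q := by rw [hEq]; exact mem_append_left _ hv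
      rcases hsmall v hv' with rfl | hlt'
      · exact absurd hmv (lt_irrefl _)
      · exact absurd (hmv.trans hlt') (lt_irrefl _)
  obtain ⟨A₁, A₂, rfl⟩ := append_of_mem hmA
  have hPW : (A₁ ++ m :: A₂).Pairwise (· < ·) := isChain_iff_pairwise.mp hAc
  have hA₂ : A₂ = [] := by
    rcases A₂ with _ | ⟨y, A₂'⟩
    · rfl
    · exfalso
      have hmy : m < y := by
        have := (pairwise_append.mp hPW).2.1
        exact rel_of_pairwise_cons this (mem_cons_self)
      have hy : y ∈ p ++ m :: q := by
        rw [hEq]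
        exact mem_append_left _ (mem_append_right _ (mem_cons_of_mem _ (mem_cons_self)))
      rcases hsmall y hy with rfl | hlt'
      · exact absurd hmy (lt_irrefl _)
      · exact absurd (hmy.trans hlt') (lt_irrefl _)
  subst hA₂
  have hmp : m ∉ p := fun hm => absurd (hlt m (mem_append_left _ hm)) (lt_irrefl _)
  have hmA₁ : m ∉ A₁ := by
    intro hm
    have := (pairwise_append.mp hPW).2.2 m hm m (mem_cons_self)
    exact absurd this (lt_irrefl _)
  have hEq' : A₁ ++ m :: D = p ++ m :: q := by
    rw [hEq]; simp
  obtain ⟨rfl, rfl⟩ := unique_sep A₁ p D q hEq' hmA₁ hmp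
  refine ⟨?_, hDc, fun u hu v hv => hAD u hu v (mem_append_left _ hv)⟩
  exact hAc

lemma insertBefore_eq {p : List ℤ} (x m : ℤ) (q : List ℤ) (hp : x ∉ p) :
    insertBefore (p ++ x :: q) x m = p ++ m :: x :: q := by
  induction p with
  | nil => simp [insertBefore]
  | cons b p ih =>
    have hbx : (b != x) = true := by
      simp only [bne_iff_ne, ne_eq]
      exact fun h => hp (h ▸ mem_cons_self (a := b) (l := p))
    have hp' : x ∉ p := fun h => hp (mem_cons_of_mem _ h)
    simp only [insertBefore, cons_append, takeWhile_cons, dropWhile_cons, hbx,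
      if_true, cond_true] at ih ⊢
    rw [ih hp']


lemma dropWhile_head_false {α : Type*} (P : α → Bool) :
    ∀ (l : List α) (b : α) (t : List α), l.dropWhile P = b :: t → P b = false := by
  intro l
  induction l with
  | nil => intro b t h; simp at h
  | cons c l ih =>
    intro b t h
    rw [List.dropWhile_cons] at h
    by_cases hc : P c
    · rw [if_pos hc] at h; exact ih b t h
    · rw [if_neg hc] at h
      injection h with h1 h2
      subst h1
      simpa using hc

/-- Entry/exit lemma, second part: if `S` is a non-singlet family and `x ∉ S` is inserted
regularly into `S` to obtain a family `S'`, then `x` is in an exit position in `S'`. -/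
theorem entry_exit_second (l : List ℤ) (x : ℤ) (l' : List ℤ)
    (hfam : IsFamilySeq l) (hx : x ∉ l) (hins : RegInsert l x l') :
    IsFamilySeq l' ∧ ExitPos l' x := by
  clear hfam
  obtain ⟨a, d, rfl, ha, hd, hac, hdc, had, hcase⟩ := hins
  have hxa : x ∉ a := fun h => hx (mem_append_left _ h)
  have hxd : x ∉ d := fun h => hx (mem_append_right _ h)
  have hapw : a.Pairwise (· < ·) := isChain_iff_pairwise.mp hac
  have hdpw : d.Pairwise (· > ·) := isChain_iff_pairwise.mp hdc
  rcases hcase with ⟨hbig, rfl⟩ | ⟨⟨u0, hu0, hxu0⟩, rfl⟩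
  · -- Case 1: x inserted among the reds
    have hperm := List.perm_orderedInsert (· ≤ ·) x a
    have hnodupa : a.Nodup := hapw.imp ne_of_lt
    have hnodup : (List.orderedInsert (· ≤ ·) x a).Nodup :=
      hperm.nodup_iff.mpr (nodup_cons.mpr ⟨hxa, hnodupa⟩)
    have hsorted : (List.orderedInsert (· ≤ ·) x a).Pairwise (· ≤ ·) :=
      List.Pairwise.orderedInsert x a (hapw.imp le_of_lt)
    have ha'pw : (List.orderedInsert (· ≤ ·) x a).Pairwise (· < ·) :=
      (hsorted.and hnodup).imp (fun h => lt_of_le_of_ne h.1 h.2)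
    have ha'c : (List.orderedInsert (· ≤ ·) x a).Chain' (· < ·) :=
      isChain_iff_pairwise.mpr ha'pw
    have ha'ne : List.orderedInsert (· ≤ ·) x a ≠ [] := by
      have hlen := List.orderedInsert_length (· ≤ ·) a x
      intro h; rw [h] at hlen; simp at hlen
    have hfam' : IsFamilySeq (List.orderedInsert (· ≤ ·) x a ++ d) := by
      refine ⟨_, d, rfl, ha'ne, hd, ha'c, hdc, fun u hu v hv => ?_⟩
      rcases (List.mem_orderedInsert _).mp hv with rfl | hv
      · exact hbig u hu
      · exact had u hu v hv
    refine ⟨hfam', ?_, ?_⟩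
    · exact mem_append_left _ ((List.mem_orderedInsert _).mpr (Or.inl rfl))
    -- decomposition of the ordered insert
    obtain ⟨a₁, a₂, hsplit, h₁lt, h₁₂, h₂head⟩ :
        ∃ a₁ a₂ : List ℤ, List.orderedInsert (· ≤ ·) x a = a₁ ++ x :: a₂ ∧
          (∀ v ∈ a₁, v < x) ∧ a₁ ++ a₂ = a ∧
          (∀ b t, a₂ = b :: t → x < b) := by
      refine ⟨a.takeWhile (fun b => decide ¬ x ≤ b), a.dropWhile (fun b => decide ¬ x ≤ b),
        List.orderedInsert_eq_take_drop _ x a, ?_, List.takeWhile_append_dropWhile, ?_⟩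
      · intro v hv
        have := List.mem_takeWhile_imp hv
        simp only [decide_eq_true_eq] at this
        exact lt_of_not_ge this
      · intro b t hbt
        have hPb := dropWhile_head_false _ _ _ _ hbt
        simp only [decide_eq_false_iff_not, not_not] at hPb
        have hb : b ∈ a := by
          have : b ∈ a.dropWhile (fun b => decide ¬ x ≤ b) := by
            rw [hbt]; exact mem_cons_self
          exact (List.dropWhile_sublist _).subset this
        exact lt_of_le_of_ne hPb (fun h => hxa (h ▸ hb))
    have hxa₁ : x ∉ a₁ := fun h => absurd (h₁lt x h) (lt_irrefl _)
    have hrepr : List.orderedInsert (· ≤ ·) x a ++ d = a₁ ++ x :: (a₂ ++ d) := by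
      rw [hsplit]; simp
    intro m hm hfamm
    rw [hrepr, insertBefore_eq x m _ hxa₁] at hfamm
    have hm' : ∀ y ∈ a₁ ++ x :: (a₂ ++ d), y < m := by rw [← hrepr]; exact hm
    obtain ⟨hA, hD, hqp⟩ := key_split hm' hfamm
    rcases a₂ with _ | ⟨b, a₂'⟩
    · obtain ⟨v, hv⟩ := exists_mem_of_ne_nil a ha
      have hva : v ∈ a₁ := by rw [← h₁₂] at hv; simpa using hv
      exact absurd (hqp x (mem_cons_self) v hva) (asymm (h₁lt v hva))
    · have hxb : x < b := h₂head b a₂' rfl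
      have hbx : x > b := by
        have hD' : Chain' (· > ·) (x :: b :: (a₂' ++ d)) := by simpa using hD
        exact (List.isChain_cons_cons.mp hD').1
      exact absurd hxb (asymm hbx)
  · -- Case 2: x inserted among the blues
    haveI hTot : IsTotal ℤ (fun p q : ℤ => q ≤ p) := ⟨fun a b => le_total b a⟩
    haveI hTr : IsTrans ℤ (fun p q : ℤ => q ≤ p) := ⟨fun a b c h1 h2 => le_trans h2 h1⟩
    have hperm := List.perm_orderedInsert (fun p q : ℤ => q ≤ p) x d
    have hnodupd : d.Nodup := hdpw.imp ne_of_gt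
    have hnodup : (List.orderedInsert (fun p q : ℤ => q ≤ p) x d).Nodup :=
      hperm.nodup_iff.mpr (nodup_cons.mpr ⟨hxd, hnodupd⟩)
    have hsorted : (List.orderedInsert (fun p q : ℤ => q ≤ p) x d).Pairwise (fun p q => q ≤ p) :=
      List.Pairwise.orderedInsert x d (hdpw.imp le_of_lt)
    have hd'pw : (List.orderedInsert (fun p q : ℤ => q ≤ p) x d).Pairwise (· > ·) :=
      (hsorted.and hnodup).imp (fun h => h.1.lt_of_ne h.2.symm)
    have hd'c : (List.orderedInsert (fun p q : ℤ => q ≤ p) x d).Chain' (· > ·) :=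
      isChain_iff_pairwise.mpr hd'pw
    have hd'ne : List.orderedInsert (fun p q : ℤ => q ≤ p) x d ≠ [] := by
      have hlen := List.orderedInsert_length (fun p q : ℤ => q ≤ p) d x
      intro h; rw [h] at hlen; simp at hlen
    have hfam' : IsFamilySeq (a ++ List.orderedInsert (fun p q : ℤ => q ≤ p) x d) := by
      refine ⟨a, _, rfl, ha, hd'ne, hac, hd'c, fun u hu v hv => ?_⟩
      rcases (List.mem_orderedInsert _).mp hu with rfl | hu
      · exact lt_trans hxu0 (had u0 hu0 v hv)
      · exact had u hu v hv
    refine ⟨hfam', ?_, ?_⟩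
    · exact mem_append_right _ ((List.mem_orderedInsert _).mpr (Or.inl rfl))
    obtain ⟨d₁, d₂, hsplit, h₁lt, h₁₂, h₁ne⟩ :
        ∃ d₁ d₂ : List ℤ, List.orderedInsert (fun p q : ℤ => q ≤ p) x d = d₁ ++ x :: d₂ ∧
          (∀ v ∈ d₁, x < v) ∧ d₁ ++ d₂ = d ∧ d₁ ≠ [] := by
      refine ⟨d.takeWhile (fun b => decide ¬ b ≤ x), d.dropWhile (fun b => decide ¬ b ≤ x),
        List.orderedInsert_eq_take_drop _ x d, ?_, List.takeWhile_append_dropWhile, ?_⟩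
      · intro v hv
        have := List.mem_takeWhile_imp hv
        simp only [decide_eq_true_eq] at this
        exact lt_of_not_ge this
      · obtain ⟨h0, t0, rfl⟩ : ∃ h0 t0, d = h0 :: t0 := by
          cases d with
          | nil => exact absurd rfl hd
          | cons h0 t0 => exact ⟨h0, t0, rfl⟩
        have hxh0 : x < h0 := by
          rcases mem_cons.mp hu0 with rfl | hu0'
          · exact hxu0
          · exact lt_trans hxu0 (rel_of_pairwise_cons hdpw hu0')
        rw [List.takeWhile_cons_of_pos (by simpa using not_le_of_gt hxh0)]
        simp
    have hxad₁ : x ∉ a ++ d₁ := by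
      intro h
      rcases mem_append.mp h with h | h
      · exact hxa h
      · exact absurd (h₁lt x h) (lt_irrefl _)
    have hrepr : a ++ List.orderedInsert (fun p q : ℤ => q ≤ p) x d = (a ++ d₁) ++ x :: d₂ := by
      rw [hsplit, append_assoc]
    intro m hm hfamm
    rw [hrepr, insertBefore_eq x m _ hxad₁] at hfamm
    have hm' : ∀ y ∈ (a ++ d₁) ++ x :: d₂, y < m := by rw [← hrepr]; exact hm
    obtain ⟨hA, hD, hqp⟩ := key_split hm' hfamm
    have hApw : ((a ++ d₁) ++ [m]).Pairwise (· < ·) := isChain_iff_pairwise.mp hA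
    have hpw2 : (a ++ d₁).Pairwise (· < ·) := hApw.sublist (sublist_append_left _ _)
    have cross := (pairwise_append.mp hpw2).2.2
    obtain ⟨v, hv⟩ := exists_mem_of_ne_nil a ha
    obtain ⟨w, hw⟩ := exists_mem_of_ne_nil d₁ h₁ne
    have hwd : w ∈ d := by rw [← h₁₂]; exact mem_append_left _ hw
    exact absurd (cross v hv w hw) (asymm (had w hwd v hv))
end

section
/- The fundamental r-part multinomials satisfy the Eulerian-type recurrence N^{[r]}_{k,l} = k N^{[r]}_{k,l-1} + l N^{[r]}_{k-1,l} + (k+l-1)(N^{[r-1]}_{k-1,l-1} - r N^{[r]}_{k-1,l-1}). -/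
/-- The fundamental `r`-part multinomial `N^{[r]}_{k,l}`: the number of unordered
partitions of `{1,…,k+l}` into `r` bicolored sets, each carrying a number of reds
`kᵢ ≥ 1` with `lᵢ = |Sᵢ| - kᵢ ≥ 1`, with `Σ kᵢ = k` (hence `Σ lᵢ = l`).  A partition is
recorded as a finset of pairs `(Sᵢ, kᵢ)`. -/
noncomputable def Nfund (k l r : ℕ) : ℕ :=
  Nat.card {P : Finset (Finset (Fin (k + l)) × ℕ) //
    P.card = r ∧
    (∀ p ∈ P, 1 ≤ p.2 ∧ p.2 < p.1.card) ∧
    (P : Set (Finset (Fin (k + l)) × ℕ)).Pairwise (fun p q => Disjoint p.1 q.1) ∧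
    P.sup Prod.fst = Finset.univ ∧
    ∑ p ∈ P, p.2 = k}

/-- The shifted multinomial `N^{(s)}_{k,l} = Σ_{r ≥ max(-s,1)} (r+s)! · N^{[r]}_{k,l}`,
with `(r+s)!` interpreted as `0` when `r + s < 0`.  (All terms with `r > k + l`
vanish.) -/
noncomputable def Nshift (k l : ℕ) (s : ℤ) : ℕ :=
  ∑ r ∈ Finset.Icc 1 (k + l),
    (if 0 ≤ (r : ℤ) + s then ((r : ℤ) + s).toNat.factorial else 0) * Nfund k l r

namespace NfundAux
open Finset

def Ok (n k r : ℕ) (C : Finset (Fin n)) (P : Finset (Finset (Fin n) × ℕ)) : Prop :=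
  P.card = r ∧
  (∀ p ∈ P, 1 ≤ p.2 ∧ p.2 < p.1.card) ∧
  (P : Set (Finset (Fin n) × ℕ)).Pairwise (fun p q => Disjoint p.1 q.1) ∧
  P.sup Prod.fst = C ∧
  ∑ p ∈ P, p.2 = k


instance okFinite (n k r : ℕ) (C : Finset (Fin n)) :
    Finite {P : Finset (Finset (Fin n) × ℕ) // Ok n k r C P} := by
  classical
  have h : {P : Finset (Finset (Fin n) × ℕ) | Ok n k r C P} ⊆
      ↑((Finset.univ ×ˢ Finset.range (n+1) :
        Finset (Finset (Fin n) × ℕ)).powerset) := by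
    intro P hP
    simp only [Finset.coe_powerset, Set.mem_preimage, Set.mem_powerset_iff]
    intro p hp
    have hp' : p ∈ P := hp
    have h2 := hP.2.1 p hp'
    have hcard : p.1.card ≤ n := by simpa using Finset.card_le_univ p.1
    exact Finset.mem_product.2 ⟨Finset.mem_univ _, Finset.mem_range.2 (by omega)⟩
  exact (Set.Finite.subset ((Finset.univ ×ˢ Finset.range (n+1) :
    Finset (Finset (Fin n) × ℕ)).powerset.finite_toSet) h).to_subtype


variable {n k r : ℕ} {C : Finset (Fin n)} {P : Finset (Finset (Fin n) × ℕ)}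

lemma Ok.block_subset (h : Ok n k r C P) {p} (hp : p ∈ P) : p.1 ⊆ C := by
  have := Finset.le_sup (f := Prod.fst) hp
  rwa [h.2.2.2.1] at this

lemma Ok.disj (h : Ok n k r C P) {p q} (hp : p ∈ P) (hq : q ∈ P) (hne : p ≠ q) :
    Disjoint p.1 q.1 := h.2.2.1 hp hq hne

lemma Ok.sum_card (h : Ok n k r C P) : ∑ p ∈ P, p.1.card = C.card := by
  classical
  rw [← h.2.2.2.1, Finset.sup_eq_biUnion, Finset.card_biUnion]
  intro x hx y hy hxy; exact h.disj hx hy hxy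

lemma Ok.label_le (h : Ok n k r C P) {p} (hp : p ∈ P) : p.2 ≤ k := by
  rw [← h.2.2.2.2]
  exact Finset.single_le_sum (f := Prod.snd) (fun i _ => Nat.zero_le _) hp

lemma Ok.sum_colabel (h : Ok n k r C P) :
    ∑ p ∈ P, (p.1.card - p.2) = C.card - k := by
  have := Finset.sum_tsub_distrib (s := P) (f := fun p => p.1.card) (g := fun p => p.2)
    (fun p hp => le_of_lt (h.2.1 p hp).2)
  rw [this, h.sum_card, h.2.2.2.2]

lemma Ok.colabel_le (h : Ok n k r C P) {p} (hp : p ∈ P) : p.1.card - p.2 ≤ C.card - k := by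
  rw [← h.sum_colabel]
  exact Finset.single_le_sum (f := fun p => p.1.card - p.2) (fun i _ => Nat.zero_le _) hp


section Relabel

variable {m : ℕ} (hC : C.card = m)

/-- the increasing enumeration of `C` -/
noncomputable def emb (hC : C.card = m) : Fin m ↪ Fin n :=
  (C.orderEmbOfFin hC).toEmbedding

lemma emb_mem (i : Fin m) : emb hC i ∈ C := C.orderEmbOfFin_mem hC i

lemma emb_surj {x : Fin n} (hx : x ∈ C) : ∃ i, emb hC i = x := by
  have : x ∈ Set.range (C.orderEmbOfFin hC) := by
    rw [C.range_orderEmbOfFin hC]; exact hx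
  exact this

noncomputable def up (hC : C.card = m) (B : Finset (Fin m)) : Finset (Fin n) :=
  B.map (emb hC)

noncomputable def down (hC : C.card = m) (B : Finset (Fin n)) : Finset (Fin m) :=
  Finset.univ.filter (fun i => emb hC i ∈ B)

lemma mem_up {B : Finset (Fin m)} {x : Fin n} :
    x ∈ up hC B ↔ ∃ i ∈ B, emb hC i = x := Finset.mem_map

lemma mem_down {B : Finset (Fin n)} {i : Fin m} :
    i ∈ down hC B ↔ emb hC i ∈ B := by simp [down]

lemma down_up (B : Finset (Fin m)) : down hC (up hC B) = B := by
  ext i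
  rw [mem_down, mem_up]
  constructor
  · rintro ⟨j, hj, hji⟩
    rwa [← (emb hC).injective hji]
  · intro hi; exact ⟨i, hi, rfl⟩

lemma up_down {B : Finset (Fin n)} (hB : B ⊆ C) : up hC (down hC B) = B := by
  ext x
  rw [mem_up]
  constructor
  · rintro ⟨i, hi, rfl⟩; exact (mem_down hC).1 hi
  · intro hx
    obtain ⟨i, rfl⟩ := emb_surj hC (hB hx)
    exact ⟨i, (mem_down hC).2 hx, rfl⟩

lemma card_up (B : Finset (Fin m)) : (up hC B).card = B.card := Finset.card_map _

lemma card_down {B : Finset (Fin n)} (hB : B ⊆ C) : (down hC B).card = B.card := by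
  conv_rhs => rw [← up_down hC hB]
  rw [card_up]

lemma up_univ : up hC Finset.univ = C := by
  ext x
  rw [mem_up]
  constructor
  · rintro ⟨i, -, rfl⟩; exact emb_mem hC i
  · intro hx
    obtain ⟨i, rfl⟩ := emb_surj hC hx
    exact ⟨i, Finset.mem_univ i, rfl⟩

lemma disjoint_up {B B' : Finset (Fin m)} (hd : Disjoint B B') :
    Disjoint (up hC B) (up hC B') := Finset.disjoint_map _ |>.2 hd

lemma disjoint_down {B B' : Finset (Fin n)} (hd : Disjoint B B') :
    Disjoint (down hC B) (down hC B') := by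
  rw [Finset.disjoint_left]
  intro i hi hi'
  exact (Finset.disjoint_left.1 hd) ((mem_down hC).1 hi) ((mem_down hC).1 hi')

/-- Relabelling: structures on `C ⊆ Fin n` correspond to structures on all of `Fin m`. -/
noncomputable def relabel (k r : ℕ) (hC : C.card = m) :
    {P : Finset (Finset (Fin n) × ℕ) // Ok n k r C P} ≃
    {Q : Finset (Finset (Fin m) × ℕ) // Ok m k r Finset.univ Q} where
  toFun := fun ⟨P, hP⟩ => by
    classical
    refine ⟨P.image (fun p => (down hC p.1, p.2)), ?_, ?_, ?_, ?_, ?_⟩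
    · rw [Finset.card_image_of_injOn, hP.1]
      intro p hp q hq hpq
      have h1 : p.1 = q.1 := by
        have e1 := congrArg (fun B => up hC B.1) hpq
        simpa [up_down hC (hP.block_subset hp), up_down hC (hP.block_subset hq)] using e1
      have h2 : p.2 = q.2 := by simpa using congrArg Prod.snd hpq
      exact Prod.ext h1 h2
    · intro q hq
      obtain ⟨p, hp, rfl⟩ := Finset.mem_image.1 hq
      refine ⟨(hP.2.1 p hp).1, ?_⟩
      rw [card_down hC (hP.block_subset hp)]
      exact (hP.2.1 p hp).2
    · intro x hx y hy hxy
      obtain ⟨p, hp, rfl⟩ := Finset.mem_image.1 hx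
      obtain ⟨q, hq, rfl⟩ := Finset.mem_image.1 hy
      have hpq : p ≠ q := by rintro rfl; exact hxy rfl
      exact disjoint_down hC (hP.2.2.1 hp hq hpq)
    · ext i
      simp only [Finset.mem_sup, Finset.mem_univ, iff_true]
      have h3 : emb hC i ∈ P.sup Prod.fst := by
        rw [hP.2.2.2.1]; exact emb_mem hC i
      obtain ⟨p, hp, hmem⟩ := Finset.mem_sup.1 h3
      exact ⟨(down hC p.1, p.2), Finset.mem_image_of_mem _ hp, (mem_down hC).2 hmem⟩
    · rw [Finset.sum_image]
      · exact hP.2.2.2.2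
      · intro p hp q hq hpq
        have h1 : p.1 = q.1 := by
          have e1 := congrArg (fun B => up hC B.1) hpq
          simpa [up_down hC (hP.block_subset hp), up_down hC (hP.block_subset hq)] using e1
        have h2 : p.2 = q.2 := by simpa using congrArg Prod.snd hpq
        exact Prod.ext h1 h2
  invFun := fun ⟨Q, hQ⟩ => by
    classical
    refine ⟨Q.image (fun q => (up hC q.1, q.2)), ?_, ?_, ?_, ?_, ?_⟩
    · rw [Finset.card_image_of_injOn, hQ.1]
      intro p hp q hq hpq
      have h1 : p.1 = q.1 := by
        have e1 := congrArg (fun B => down hC B.1) hpq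
        simpa [down_up hC] using e1
      have h2 : p.2 = q.2 := by simpa using congrArg Prod.snd hpq
      exact Prod.ext h1 h2
    · intro q hq
      obtain ⟨p, hp, rfl⟩ := Finset.mem_image.1 hq
      refine ⟨(hQ.2.1 p hp).1, ?_⟩
      rw [card_up]
      exact (hQ.2.1 p hp).2
    · intro x hx y hy hxy
      obtain ⟨p, hp, rfl⟩ := Finset.mem_image.1 hx
      obtain ⟨q, hq, rfl⟩ := Finset.mem_image.1 hy
      have hpq : p ≠ q := by rintro rfl; exact hxy rfl
      exact disjoint_up hC (hQ.2.2.1 hp hq hpq)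
    · ext x
      simp only [Finset.mem_sup]
      constructor
      · rintro ⟨p, hp, hmem⟩
        obtain ⟨q, hq, rfl⟩ := Finset.mem_image.1 hp
        obtain ⟨i, hi, rfl⟩ := (mem_up hC).1 hmem
        exact emb_mem hC i
      · intro hx
        obtain ⟨i, rfl⟩ := emb_surj hC hx
        have : i ∈ Q.sup Prod.fst := by rw [hQ.2.2.2.1]; exact Finset.mem_univ i
        obtain ⟨q, hq, hmem⟩ := Finset.mem_sup.1 this
        exact ⟨(up hC q.1, q.2), Finset.mem_image_of_mem _ hq,
          (mem_up hC).2 ⟨i, hmem, rfl⟩⟩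
    · rw [Finset.sum_image]
      · exact hQ.2.2.2.2
      · intro p hp q hq hpq
        have h1 : p.1 = q.1 := by
          have e1 := congrArg (fun B => down hC B.1) hpq
          simpa [down_up hC] using e1
        have h2 : p.2 = q.2 := by simpa using congrArg Prod.snd hpq
        exact Prod.ext h1 h2
  left_inv := fun ⟨P, hP⟩ => by
    classical
    apply Subtype.ext
    simp only [Finset.image_image]
    rw [show ((fun q : Finset (Fin m) × ℕ => (up hC q.1, q.2)) ∘
        (fun p : Finset (Fin n) × ℕ => (down hC p.1, p.2))) =
        (fun p => (up hC (down hC p.1), p.2)) from rfl]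
    rw [Finset.image_congr (g := id), Finset.image_id]
    intro p hp
    simp only [id_eq]
    rw [up_down hC (hP.block_subset hp)]
  right_inv := fun ⟨Q, hQ⟩ => by
    classical
    apply Subtype.ext
    simp only [Finset.image_image]
    rw [show ((fun p : Finset (Fin n) × ℕ => (down hC p.1, p.2)) ∘
        (fun q : Finset (Fin m) × ℕ => (up hC q.1, q.2))) =
        (fun q => (down hC (up hC q.1), q.2)) from rfl]
    rw [Finset.image_congr (g := id), Finset.image_id]
    intro q hq
    simp only [id_eq]
    rw [down_up hC]

end Relabel

section EraseInsert

variable {n : ℕ}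

lemma Ok.erase_ok {k r : ℕ} {X : Finset (Finset (Fin n) × ℕ)}
    (hX : Ok n k (r + 1) Finset.univ X) {p : Finset (Fin n) × ℕ} (hp : p ∈ X) :
    Ok n (k - p.2) r p.1ᶜ (X.erase p) := by
  classical
  refine ⟨?_, ?_, ?_, ?_, ?_⟩
  · rw [Finset.card_erase_of_mem hp, hX.1]
    omega
  · intro q hq; exact hX.2.1 q (Finset.mem_of_mem_erase hq)
  · exact Set.Pairwise.mono (by simp [Finset.coe_subset]) hX.2.2.1
  · ext x
    rw [Finset.mem_sup]
    constructor
    · rintro ⟨q, hq, hmem⟩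
      have hqX := Finset.mem_of_mem_erase hq
      have hne : q ≠ p := Finset.ne_of_mem_erase hq
      have hd := hX.2.2.1 hqX hp hne
      simp only [Finset.mem_compl]
      exact fun hxp => Finset.disjoint_left.1 hd hmem hxp
    · intro hx
      have hxu : x ∈ X.sup Prod.fst := by rw [hX.2.2.2.1]; exact Finset.mem_univ x
      obtain ⟨q, hq, hmem⟩ := Finset.mem_sup.1 hxu
      have hne : q ≠ p := by
        rintro rfl
        exact (Finset.mem_compl.1 hx) hmem
      exact ⟨q, Finset.mem_erase.2 ⟨hne, hq⟩, hmem⟩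
  · have := Finset.sum_erase_add X Prod.snd hp
    have h2 := hX.2.2.2.2
    omega

lemma Ok.not_mem_insert {k' r a : ℕ} {S : Finset (Fin n)} {Q : Finset (Finset (Fin n) × ℕ)}
    (hQ : Ok n k' r Sᶜ Q) (hS : S.Nonempty) : (S, a) ∉ Q := by
  intro hmem
  have hsub : S ⊆ Sᶜ := hQ.block_subset hmem
  obtain ⟨x, hx⟩ := hS
  exact (Finset.mem_compl.1 (hsub hx)) hx

lemma Ok.insert_ok {k' r a : ℕ} {S : Finset (Fin n)} {Q : Finset (Finset (Fin n) × ℕ)}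
    (hQ : Ok n k' r Sᶜ Q) (ha1 : 1 ≤ a) (haS : a < S.card) :
    Ok n (a + k') (r + 1) Finset.univ (insert (S, a) Q) := by
  classical
  have hS : S.Nonempty := Finset.card_pos.1 (by omega)
  have hnot : (S, a) ∉ Q := hQ.not_mem_insert hS
  refine ⟨?_, ?_, ?_, ?_, ?_⟩
  · rw [Finset.card_insert_of_notMem hnot, hQ.1]
  · intro q hq
    rcases Finset.mem_insert.1 hq with h | h
    · subst h; exact ⟨ha1, haS⟩
    · exact hQ.2.1 q h
  · rw [Finset.coe_insert]
    refine (haveI : Std.Symm (fun p q : Finset (Fin n) × ℕ => Disjoint p.1 q.1) := ⟨?_⟩; Set.pairwise_insert_of_symm) |>.2 ⟨hQ.2.2.1, ?_⟩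
    · intro x y hxy; exact hxy.symm
    · intro q hq hne
      have hsub : q.1 ⊆ Sᶜ := hQ.block_subset hq
      exact Finset.disjoint_left.2 (fun x hxS hxq => Finset.mem_compl.1 (hsub hxq) hxS)
  · rw [Finset.sup_insert, hQ.2.2.2.1]
    simp [Finset.sup_eq_union]
  · rw [Finset.sum_insert hnot, hQ.2.2.2.2]

end EraseInsert

section Master

/-- The type of structures with a distinguished block and an index below a weight. -/
abbrev Tset (k l R : ℕ) (w : ℕ → ℕ → ℕ) :=
  {x : {P : Finset (Finset (Fin (k+l)) × ℕ) // Ok (k+l) k R Finset.univ P} ×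
       ((Finset (Fin (k+l)) × ℕ) × ℕ) //
    x.2.1 ∈ x.1.val ∧ x.2.2 < w x.2.1.2 (x.2.1.1.card - x.2.1.2)}

def TsetEquivSigma (k l R : ℕ) (w : ℕ → ℕ → ℕ) :
    Tset k l R w ≃
    Σ X : {P : Finset (Finset (Fin (k+l)) × ℕ) // Ok (k+l) k R Finset.univ P},
      Σ p : {q : Finset (Fin (k+l)) × ℕ // q ∈ X.val},
        Fin (w p.val.2 (p.val.1.card - p.val.2)) where
  toFun x := ⟨x.val.1, ⟨x.val.2.1, x.prop.1⟩, ⟨x.val.2.2, x.prop.2⟩⟩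
  invFun s := ⟨⟨s.1, (s.2.1.val, s.2.2.val)⟩, s.2.1.prop, s.2.2.isLt⟩
  left_inv x := rfl
  right_inv s := rfl

instance tsetFinite (k l R : ℕ) (w : ℕ → ℕ → ℕ) : Finite (Tset k l R w) :=
  Finite.of_equiv _ (TsetEquivSigma k l R w).symm

lemma nat_card_sigma {ι : Type*} [Fintype ι] (f : ι → Type*) [∀ i, Finite (f i)] :
    Nat.card (Σ i, f i) = ∑ i, Nat.card (f i) := by
  letI := fun i => Fintype.ofFinite (f i)
  simp [Nat.card_eq_fintype_card, Fintype.card_sigma]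

lemma Nfund_eq (k l r : ℕ) :
    Nfund k l r = Nat.card {P : Finset (Finset (Fin (k+l)) × ℕ) //
      Ok (k+l) k r Finset.univ P} := rfl

theorem card_Tset (k l R : ℕ) (w : ℕ → ℕ → ℕ) (c : ℕ)
    (hc : ∀ X : {P : Finset (Finset (Fin (k+l)) × ℕ) // Ok (k+l) k R Finset.univ P},
      ∑ p ∈ X.val, w p.2 (p.1.card - p.2) = c) :
    Nat.card (Tset k l R w) = c * Nfund k l R := by
  classical
  rw [Nat.card_congr (TsetEquivSigma k l R w)]
  letI : Fintype {P : Finset (Finset (Fin (k+l)) × ℕ) // Ok (k+l) k R Finset.univ P} :=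
    Fintype.ofFinite _
  rw [nat_card_sigma]
  have inner : ∀ X : {P : Finset (Finset (Fin (k+l)) × ℕ) // Ok (k+l) k R Finset.univ P},
      Nat.card (Σ p : {q : Finset (Fin (k+l)) × ℕ // q ∈ X.val},
        Fin (w p.val.2 (p.val.1.card - p.val.2))) = c := by
    intro X
    rw [nat_card_sigma]
    simp only [Nat.card_eq_fintype_card, Fintype.card_fin]
    rw [← hc X]
    exact Finset.sum_coe_sort X.val (fun p => w p.2 (p.1.card - p.2))
  simp only [inner]
  rw [Finset.sum_const, smul_eq_mul, Finset.card_univ, ← Nat.card_eq_fintype_card,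
    ← Nfund_eq, Nat.mul_comm]

lemma compl_card_eq {k l a b : ℕ} (hak : a ≤ k) (hbl : b ≤ l)
    {S : Finset (Fin (k+l))} (hS : S.card = a + b) :
    Sᶜ.card = (k - a) + (l - b) := by
  rw [Finset.card_compl, hS, Fintype.card_fin]
  omega

set_option maxHeartbeats 1000000 in
/-- The fiber of `Tset` over block data `(a, b)`. -/
noncomputable def fiberEquiv (k l r a b : ℕ) (w : ℕ → ℕ → ℕ)
    (ha1 : 1 ≤ a) (hak : a ≤ k) (hb1 : 1 ≤ b) (hbl : b ≤ l) :
    {x : Tset k l (r+1) w //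
      x.val.2.1.2 = a ∧ x.val.2.1.1.card - x.val.2.1.2 = b} ≃
    Fin (w a b) × {S : Finset (Fin (k+l)) // S.card = a + b} ×
      {Q : Finset (Finset (Fin ((k-a)+(l-b))) × ℕ) //
        Ok ((k-a)+(l-b)) (k-a) r Finset.univ Q} where
  toFun := fun x => match x with
    | ⟨⟨⟨X, p, i⟩, hmem, hi⟩, hpa, hpb⟩ =>
      ⟨⟨i, by
          have hpa' : p.2 = a := hpa
          have hpb' : p.1.card - p.2 = b := hpb
          have hi' : i < w p.2 (p.1.card - p.2) := hi
          rw [hpb', hpa'] at hi'; exact hi'⟩,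
       ⟨p.1, by
          have hpa' : p.2 = a := hpa
          have hpb' : p.1.card - p.2 = b := hpb
          have h1 := (X.prop.2.1 p hmem).2; omega⟩,
       relabel (k - a) r
         (compl_card_eq hak hbl (show p.1.card = a + b by
            have hpa' : p.2 = a := hpa
            have hpb' : p.1.card - p.2 = b := hpb
            have h1 := (X.prop.2.1 p hmem).2; omega))
         ⟨X.val.erase p, by
            have hpa' : p.2 = a := hpa
            have h := X.prop.erase_ok hmem
            rwa [hpa'] at h⟩⟩
  invFun y :=
    ⟨⟨⟨⟨insert (y.2.1.val, a)
        (((relabel (k - a) r (compl_card_eq hak hbl y.2.1.prop)).symm y.2.2).val), by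
        have h := (((relabel (k - a) r
          (compl_card_eq hak hbl y.2.1.prop)).symm y.2.2)).prop.insert_ok
          (a := a) ha1 (by have := y.2.1.prop; omega)
        have hka : a + (k - a) = k := by omega
        rwa [hka] at h⟩,
      ((y.2.1.val, a), y.1.val)⟩,
     ⟨Finset.mem_insert_self _ _, by
        show y.1.val < w a (y.2.1.val.card - a)
        have hb' : y.2.1.val.card - a = b := by have := y.2.1.prop; omega
        rw [hb']
        exact y.1.isLt⟩⟩,
     ⟨rfl, by
        show y.2.1.val.card - a = b
        have := y.2.1.prop; omega⟩⟩
  left_inv x := by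
    classical
    obtain ⟨⟨⟨X, p, i⟩, hmem, hi⟩, hpa, hpb⟩ := x
    have hpa' : p.2 = a := hpa
    have hpb' : p.1.card - p.2 = b := hpb
    subst hpa'
    subst hpb'
    have hak' : p.2 ≤ k := hak
    have hbl' : p.1.card - p.2 ≤ l := hbl
    apply Subtype.ext
    apply Subtype.ext
    have hQ : (((relabel (k - p.2) r
        (compl_card_eq (S := p.1) hak' hbl' (by
          have h1 := (X.prop.2.1 p hmem).2
          omega))).symm ((relabel (k - p.2) r
        (compl_card_eq (S := p.1) hak' hbl' (by
          have h1 := (X.prop.2.1 p hmem).2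
          omega)))
       ⟨X.val.erase p, X.prop.erase_ok hmem⟩)).val :
        Finset (Finset (Fin (k+l)) × ℕ)) = X.val.erase p :=
      congrArg Subtype.val (Equiv.symm_apply_apply _ _)
    have hins : insert (p.1, p.2) (X.val.erase p) = X.val := by
      rw [Prod.mk.eta, Finset.insert_erase hmem]
    refine Prod.ext (Subtype.ext ?_) (Prod.ext ?_ rfl)
    · exact (congrArg (fun t => insert (p.1, p.2) t) hQ).trans hins
    · exact Prod.mk.eta
  right_inv y := by
    classical
    obtain ⟨i, ⟨S, hS⟩, Y⟩ := y
    have hnot : (S, a) ∉ (((relabel (k - a) r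
        (compl_card_eq hak hbl hS)).symm Y)).val :=
      (((relabel (k - a) r (compl_card_eq hak hbl hS)).symm Y)).prop.not_mem_insert
        (Finset.card_pos.1 (by omega))
    have herase : (insert (S, a)
        (((relabel (k - a) r (compl_card_eq hak hbl hS)).symm Y)).val).erase (S, a) =
        (((relabel (k - a) r (compl_card_eq hak hbl hS)).symm Y)).val :=
      Finset.erase_insert hnot
    refine Prod.ext (Fin.ext rfl) (Prod.ext (Subtype.ext rfl) ?_)
    show relabel (k - a) r (compl_card_eq hak hbl hS) _ = Y
    have h2 : (⟨(insert (S, a)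
        (((relabel (k - a) r (compl_card_eq hak hbl hS)).symm Y)).val).erase (S, a),
        by
          have h := ((relabel (k - a) r
            (compl_card_eq hak hbl hS)).symm Y).prop
          rwa [← herase] at h⟩ :
        {Q : Finset (Finset (Fin (k+l)) × ℕ) // Ok (k+l) (k-a) r Sᶜ Q}) =
        ((relabel (k - a) r (compl_card_eq hak hbl hS)).symm Y) := Subtype.ext herase
    exact (congrArg (relabel (k - a) r (compl_card_eq hak hbl hS)) h2).trans
      (Equiv.apply_symm_apply _ _)

end Master

lemma card_subtype_card (n m : ℕ) :
    Nat.card {S : Finset (Fin n) // S.card = m} = n.choose m := by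
  classical
  rw [Nat.card_eq_fintype_card, Fintype.card_subtype]
  have h : (Finset.univ.filter (fun S : Finset (Fin n) => S.card = m)) =
      Finset.powersetCard m Finset.univ := by
    ext S; simp [Finset.mem_powersetCard_univ]
  rw [h, Finset.card_powersetCard, Finset.card_univ, Fintype.card_fin]

theorem master (k l r : ℕ) (w : ℕ → ℕ → ℕ) :
    Nat.card (Tset k l (r+1) w) =
    ∑ a ∈ Finset.Icc 1 k, ∑ b ∈ Finset.Icc 1 l,
      w a b * Nat.choose (k+l) (a+b) * Nfund (k-a) (l-b) r := by
  classical
  letI : Fintype (Tset k l (r+1) w) := Fintype.ofFinite _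
  rw [Nat.card_eq_fintype_card, ← Finset.card_univ]
  rw [Finset.card_eq_sum_card_fiberwise (f := fun x : Tset k l (r+1) w =>
    (x.val.2.1.2, x.val.2.1.1.card - x.val.2.1.2))
    (t := Finset.Icc 1 k ×ˢ Finset.Icc 1 l)
    (fun x _ => ?_)]
  · rw [Finset.sum_product]
    refine Finset.sum_congr rfl (fun a ha => Finset.sum_congr rfl (fun b hb => ?_))
    rw [Finset.mem_Icc] at ha hb
    rw [← Fintype.card_subtype, ← Nat.card_eq_fintype_card]
    rw [Nat.card_congr ((Equiv.subtypeEquivRight (fun x => by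
        constructor
        · intro hx
          exact ⟨congrArg Prod.fst hx, congrArg Prod.snd hx⟩
        · rintro ⟨h1, h2⟩
          exact Prod.ext h1 h2)).trans
      (fiberEquiv k l r a b w ha.1 ha.2 hb.1 hb.2))]
    rw [Nat.card_prod, Nat.card_prod, Nat.card_eq_fintype_card, Fintype.card_fin,
      card_subtype_card, ← Nfund_eq, Nat.mul_assoc]
  · -- membership of the size map in the grid
    have hmem := x.prop.1
    have hlab := x.val.1.prop.2.1 _ hmem
    have hle : x.val.2.1.2 ≤ k := x.val.1.prop.label_le hmem
    have hcole := x.val.1.prop.colabel_le hmem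
    rw [Finset.card_univ, Fintype.card_fin] at hcole
    change _ ∈ Finset.Icc 1 k ×ˢ Finset.Icc 1 l
    simp only [Finset.mem_product, Finset.mem_Icc]
    refine ⟨⟨hlab.1, hle⟩, ?_, ?_⟩
    · omega
    · omega

theorem idA (k l r : ℕ) :
    (r+1) * Nfund k l (r+1) =
    ∑ a ∈ Finset.Icc 1 k, ∑ b ∈ Finset.Icc 1 l,
      Nat.choose (k+l) (a+b) * Nfund (k-a) (l-b) r := by
  rw [← card_Tset k l (r+1) (fun _ _ => 1) (r+1) (fun X => by
    rw [Finset.sum_const, smul_eq_mul, Nat.mul_one, X.prop.1]),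
    master]
  simp

theorem idC1 (k l r : ℕ) :
    k * Nfund k l (r+1) =
    ∑ a ∈ Finset.Icc 1 k, ∑ b ∈ Finset.Icc 1 l,
      a * (Nat.choose (k+l) (a+b) * Nfund (k-a) (l-b) r) := by
  rw [← card_Tset k l (r+1) (fun a _ => a) k (fun X => X.prop.2.2.2.2), master]
  simp [Nat.mul_assoc]

theorem idC2 (k l r : ℕ) :
    l * Nfund k l (r+1) =
    ∑ a ∈ Finset.Icc 1 k, ∑ b ∈ Finset.Icc 1 l,
      b * (Nat.choose (k+l) (a+b) * Nfund (k-a) (l-b) r) := by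
  rw [← card_Tset k l (r+1) (fun _ b => b) l (fun X => by
    have h := X.prop.sum_colabel
    rw [Finset.card_univ, Fintype.card_fin] at h
    rw [h]; omega), master]
  simp [Nat.mul_assoc]

lemma choose_mul_aux {n m : ℕ} (hm : 1 ≤ m) (hn : 1 ≤ n) :
    m * Nat.choose n m = n * Nat.choose (n-1) (m-1) := by
  obtain ⟨n', rfl⟩ : ∃ n', n = n' + 1 := ⟨n - 1, by omega⟩
  obtain ⟨m', rfl⟩ : ∃ m', m = m' + 1 := ⟨m - 1, by omega⟩
  have h := Nat.add_one_mul_choose_eq n' m'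
  simp only [Nat.add_sub_cancel]
  rw [Nat.mul_comm]
  exact h.symm

theorem idR (k l r : ℕ) (hn : 1 ≤ k + l) :
    Nfund k l (r+1) =
    ∑ a ∈ Finset.Icc 1 k, ∑ b ∈ Finset.Icc 1 l,
      Nat.choose (k+l-1) (a+b-1) * Nfund (k-a) (l-b) r := by
  refine Nat.eq_of_mul_eq_mul_left (show 0 < k + l by omega) ?_
  have h1 := idC1 k l r
  have h2 := idC2 k l r
  have hsum : (k + l) * Nfund k l (r+1) =
      ∑ a ∈ Finset.Icc 1 k, ∑ b ∈ Finset.Icc 1 l,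
        (a + b) * (Nat.choose (k+l) (a+b) * Nfund (k-a) (l-b) r) := by
    rw [Nat.add_mul, h1, h2, ← Finset.sum_add_distrib]
    refine Finset.sum_congr rfl (fun a _ => ?_)
    rw [← Finset.sum_add_distrib]
    refine Finset.sum_congr rfl (fun b _ => ?_)
    ring
  rw [hsum, Finset.mul_sum]
  refine Finset.sum_congr rfl (fun a ha => ?_)
  rw [Finset.mul_sum]
  refine Finset.sum_congr rfl (fun b hb => ?_)
  rw [Finset.mem_Icc] at ha hb
  rw [← Nat.mul_assoc, ← Nat.mul_assoc,
    choose_mul_aux (show 1 ≤ a + b by omega) hn]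

lemma sum_shift (m : ℕ) (g : ℕ → ℕ) :
    ∑ b ∈ Finset.Icc 1 m, g (b+1) = ∑ b ∈ Finset.Icc 2 (m+1), g b := by
  rw [show (2:ℕ) = 1 + 1 from rfl, show m + 1 = m + 1 from rfl,
    ← Finset.map_add_right_Icc 1 m 1, Finset.sum_map]
  rfl

theorem expand0 (k' l' r' : ℕ) :
    Nfund (k'+1) (l'+1) (r'+1) =
    ∑ a ∈ Finset.Icc 1 (k'+1), ∑ b ∈ Finset.Icc 1 (l'+1),
      (k'+l'+1).choose (a+b-1) * Nfund (k'+1-a) (l'+1-b) r' := by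
  have h := idR (k'+1) (l'+1) r' (by omega)
  rw [show k'+1+(l'+1) = k'+l'+2 from by ring] at h
  rw [show k'+l'+2-1 = k'+l'+1 from rfl] at h
  exact h

theorem expand1 (k' l' r' : ℕ) :
    (k'+1) * Nfund (k'+1) l' (r'+1) =
    ∑ a ∈ Finset.Icc 1 (k'+1), ∑ b ∈ Finset.Icc 2 (l'+1),
      a * ((k'+l'+1).choose (a+b-1) * Nfund (k'+1-a) (l'+1-b) r') := by
  rw [idC1 (k'+1) l' r']
  rw [show k'+1+l' = k'+l'+1 from by ring]
  refine Finset.sum_congr rfl (fun a ha => ?_)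
  rw [← sum_shift l' (fun b => a * ((k'+l'+1).choose (a+b-1) * Nfund (k'+1-a) (l'+1-b) r'))]
  refine Finset.sum_congr rfl (fun b hb => ?_)
  rw [Nat.succ_sub_succ, show a+(b+1)-1 = a+b from by omega]

theorem expand2 (k' l' r' : ℕ) :
    (l'+1) * Nfund k' (l'+1) (r'+1) =
    ∑ a ∈ Finset.Icc 2 (k'+1), ∑ b ∈ Finset.Icc 1 (l'+1),
      b * ((k'+l'+1).choose (a+b-1) * Nfund (k'+1-a) (l'+1-b) r') := by
  rw [idC2 k' (l'+1) r']
  rw [show k'+(l'+1) = k'+l'+1 from by ring]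
  rw [← sum_shift k' (fun a => ∑ b ∈ Finset.Icc 1 (l'+1),
    b * ((k'+l'+1).choose (a+b-1) * Nfund (k'+1-a) (l'+1-b) r'))]
  refine Finset.sum_congr rfl (fun a ha => ?_)
  refine Finset.sum_congr rfl (fun b hb => ?_)
  rw [Nat.succ_sub_succ, show a+1+b-1 = a+b from by omega]

theorem expand3 (k' l' r' : ℕ) :
    (r'+1) * Nfund k' l' (r'+1) =
    ∑ a ∈ Finset.Icc 2 (k'+1), ∑ b ∈ Finset.Icc 2 (l'+1),
      (k'+l').choose (a+b-2) * Nfund (k'+1-a) (l'+1-b) r' := by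
  rw [idA k' l' r']
  rw [← sum_shift k' (fun a => ∑ b ∈ Finset.Icc 2 (l'+1),
    (k'+l').choose (a+b-2) * Nfund (k'+1-a) (l'+1-b) r')]
  refine Finset.sum_congr rfl (fun a ha => ?_)
  rw [← sum_shift l' (fun b =>
    (k'+l').choose (a+1+b-2) * Nfund (k'+1-(a+1)) (l'+1-b) r')]
  refine Finset.sum_congr rfl (fun b hb => ?_)
  rw [Nat.succ_sub_succ, Nat.succ_sub_succ, show a+1+(b+1)-2 = a+b from by omega]

set_option maxHeartbeats 1000000 in
theorem keyZ (k' l' r' : ℕ) :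
    (Nfund (k'+1) (l'+1) (r'+1) : ℤ) +
      ((k':ℤ)+(l':ℤ)+1) * (((r':ℤ)+1) * (Nfund k' l' (r'+1) : ℤ)) =
    ((k':ℤ)+1) * (Nfund (k'+1) l' (r'+1) : ℤ) +
      ((l':ℤ)+1) * (Nfund k' (l'+1) (r'+1) : ℤ) +
      ((k':ℤ)+(l':ℤ)+1) * (Nfund k' l' r' : ℤ) := by
  classical
  have hI : Finset.Icc 1 (k'+1) = insert 1 (Finset.Icc 2 (k'+1)) := by
    ext x; simp [Finset.mem_Icc, Finset.mem_insert]; omega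
  have hJ : Finset.Icc 1 (l'+1) = insert 1 (Finset.Icc 2 (l'+1)) := by
    ext x; simp [Finset.mem_Icc, Finset.mem_insert]; omega
  have h1I : (1:ℕ) ∉ Finset.Icc 2 (k'+1) := by simp
  have h1J : (1:ℕ) ∉ Finset.Icc 2 (l'+1) := by simp
  have E0 := congrArg (Nat.cast (R := ℤ)) (expand0 k' l' r')
  have E1 := congrArg (Nat.cast (R := ℤ)) (expand1 k' l' r')
  have E2 := congrArg (Nat.cast (R := ℤ)) (expand2 k' l' r')
  have E3 := congrArg (Nat.cast (R := ℤ)) (expand3 k' l' r')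
  push_cast at E0 E1 E2 E3
  simp only [hI, hJ, Finset.sum_insert h1I, Finset.sum_insert h1J,
    Finset.sum_add_distrib, Nat.cast_one, one_mul, Nat.add_sub_cancel,
    Nat.add_sub_cancel_left, Nat.choose_one_right] at E0 E1 E2
  push_cast at E0 E1 E2
  have hcore :
      (∑ x ∈ Finset.Icc 2 (k'+1), ∑ y ∈ Finset.Icc 2 (l'+1),
        (x:ℤ) * (((k'+l'+1).choose (x+y-1) : ℤ) * (Nfund (k'+1-x) (l'+1-y) r' : ℤ))) +
      (∑ x ∈ Finset.Icc 2 (k'+1), ∑ y ∈ Finset.Icc 2 (l'+1),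
        (y:ℤ) * (((k'+l'+1).choose (x+y-1) : ℤ) * (Nfund (k'+1-x) (l'+1-y) r' : ℤ))) =
      (∑ x ∈ Finset.Icc 2 (k'+1), ∑ y ∈ Finset.Icc 2 (l'+1),
        (((k'+l'+1).choose (x+y-1) : ℤ) * (Nfund (k'+1-x) (l'+1-y) r' : ℤ))) +
      ((k':ℤ)+(l':ℤ)+1) * ∑ x ∈ Finset.Icc 2 (k'+1), ∑ y ∈ Finset.Icc 2 (l'+1),
        (((k'+l').choose (x+y-2) : ℤ) * (Nfund (k'+1-x) (l'+1-y) r' : ℤ)) := by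
    simp only [Finset.mul_sum]
    simp only [← Finset.sum_add_distrib]
    refine Finset.sum_congr rfl (fun x hx => ?_)
    refine Finset.sum_congr rfl (fun y hy => ?_)
    rw [Finset.mem_Icc] at hx hy
    have hm : (x+y-1) * (k'+l'+1).choose (x+y-1) =
        (k'+l'+1) * (k'+l').choose (x+y-2) :=
      choose_mul_aux (by omega) (by omega)
    zify [show 1 ≤ x + y by omega] at hm
    linear_combination ((Nfund (k'+1-x) (l'+1-y) r' : ℤ)) * hm
  linear_combination E0 + ((k':ℤ)+(l':ℤ)+1) * E3 - hcore - E1 - E2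

end NfundAux

/-- Eulerian-type recurrence for the fundamental multinomials:
`N^{[r]}_{k,l} = k N^{[r]}_{k,l-1} + l N^{[r]}_{k-1,l}
  + (k+l-1)(N^{[r-1]}_{k-1,l-1} - r N^{[r]}_{k-1,l-1})`. -/
theorem Nfund_recurrence (k l r : ℕ) (hk : 1 ≤ k) (hl : 1 ≤ l) (hr : 1 ≤ r) :
    (Nfund k l r : ℤ) =
      (k : ℤ) * Nfund k (l - 1) r + (l : ℤ) * Nfund (k - 1) l r +
      ((k : ℤ) + l - 1) *
        ((Nfund (k - 1) (l - 1) (r - 1) : ℤ) - (r : ℤ) * Nfund (k - 1) (l - 1) r) := by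
  obtain ⟨k', rfl⟩ : ∃ k', k = k' + 1 := ⟨k - 1, by omega⟩
  obtain ⟨l', rfl⟩ : ∃ l', l = l' + 1 := ⟨l - 1, by omega⟩
  obtain ⟨r', rfl⟩ : ∃ r', r = r' + 1 := ⟨r - 1, by omega⟩
  have h := NfundAux.keyZ k' l' r'
  simp only [Nat.add_sub_cancel]
  push_cast
  linear_combination h
end
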